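/- arXiv:2011.00817 — 7 statements merged into one kernel-verified Lean document; each statement's English description precedes it below -/
import Mathlib

section
/- Let M ≥ 1 and let J be a finite set of jobs with processing times p(i,j) ≥ 0 for each machine i ∈ {1,…,M} and job j ∈ J. Let q ≥ 1 be a real number, ℓ ≥ 1 an integer, and R, B, T ≥ 0 reals. Suppose x : {1,…,M} × J → [0,1] satisfies: (i) Σ_{i=1}^{M} x_{ij} = 1 for every j ∈ J; (ii) x_{ij} = 0 whenever p(i,j) > R; (iii) Σ_{j : p(i,j) ≥ T} x_{ij} ≤ ℓ for every i; (iv) Σ_{j : p(i,j) ≥ T} x_{ij}·p(i,j)^q ≤ B^q for every i. Then there exists an assignment σ : J → {1,…,M} such that p(σ(j), j) ≤ R for every j ∈ J, and for every machine i and every subset T' ⊆ σ^{-1}(i) with |T'| ≤ ℓ one has Σ_{j ∈ T'} p(i,j)^q ≤ 2R^q + B^q + ℓ·T^q; equivalently, the Top_ℓ^{(q)} value of the vector of job sizes assigned to each machine is at most (2R^q + B^q + ℓ·T^q)^{1/q}. -/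
open Finset Classical
set_option linter.unusedSectionVars false
set_option linter.unusedVariables false

section Rounding

variable {I J : Type} [Fintype I] [Fintype J]

/-- the set of fractional entries of `x` -/
noncomputable def fracSet (x : I → J → ℝ) : Finset (I × J) :=
  Finset.univ.filter (fun e => 0 < x e.1 e.2 ∧ x e.1 e.2 < 1)

lemma mem_fracSet {x : I → J → ℝ} {e : I × J} :
    e ∈ fracSet x ↔ 0 < x e.1 e.2 ∧ x e.1 e.2 < 1 := by
  simp [fracSet]

/-- number of fractional entries on machine `i` -/
noncomputable def degM (x : I → J → ℝ) (i : I) : ℕ :=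
  (Finset.univ.filter (fun j => 0 < x i j ∧ x i j < 1)).card

/-- potential bound for machine `i` -/
noncomputable def Gfun (w : I → J → ℝ) (Rq : ℝ) (x : I → J → ℝ) (i : I) : ℝ :=
  if degM x i ≤ 2 then ∑ j ∈ Finset.univ.filter (fun j => 0 < x i j), w i j
  else (∑ j, x i j * w i j) + 2 * Rq

lemma sum_pos_w_eq (w x : I → J → ℝ) (i : I)
    (hx0 : ∀ j, 0 ≤ x i j) (hx1 : ∀ j, x i j ≤ 1) :
    ∑ j ∈ Finset.univ.filter (fun j => 0 < x i j), w i j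
      = (∑ j, x i j * w i j)
        + ∑ j ∈ Finset.univ.filter (fun j => 0 < x i j ∧ x i j < 1), (1 - x i j) * w i j := by
  have h1 : ∑ j ∈ Finset.univ.filter (fun j => 0 < x i j), w i j
      = ∑ j ∈ Finset.univ.filter (fun j => 0 < x i j), (x i j * w i j + (1 - x i j) * w i j) := by
    apply Finset.sum_congr rfl; intro j _; ring
  have h2 : ∑ j ∈ Finset.univ.filter (fun j => 0 < x i j), x i j * w i j
      = ∑ j, x i j * w i j := by
    apply Finset.sum_subset (Finset.filter_subset _ _)
    intro j _ hj
    have : ¬ 0 < x i j := by simpa using hj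
    have hx : x i j = 0 := le_antisymm (not_lt.1 this) (hx0 j)
    simp [hx]
  have h3 : ∑ j ∈ Finset.univ.filter (fun j => 0 < x i j ∧ x i j < 1), (1 - x i j) * w i j
      = ∑ j ∈ Finset.univ.filter (fun j => 0 < x i j), (1 - x i j) * w i j := by
    apply Finset.sum_subset
    · intro j hj
      simp only [Finset.mem_filter, Finset.mem_univ, true_and] at hj ⊢
      exact hj.1
    · intro j hj hnj
      simp only [Finset.mem_filter, Finset.mem_univ, true_and] at hj hnj
      have hx : x i j = 1 := le_antisymm (hx1 j) (not_lt.1 (fun h => hnj ⟨hj, h⟩))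
      simp [hx]
  rw [h1, Finset.sum_add_distrib, h2, h3]

lemma frac_fiber_sum_le (w x : I → J → ℝ) (Rq : ℝ) (i : I)
    (hRq : 0 ≤ Rq)
    (hx0 : ∀ j, 0 ≤ x i j) (hx1 : ∀ j, x i j ≤ 1)
    (hw0 : ∀ j, 0 ≤ w i j)
    (hwR : ∀ j, 0 < x i j → w i j ≤ Rq)
    (hdeg : degM x i ≤ 2) :
    ∑ j ∈ Finset.univ.filter (fun j => 0 < x i j ∧ x i j < 1), (1 - x i j) * w i j
      ≤ 2 * Rq := by
  have hterm : ∀ j ∈ Finset.univ.filter (fun j => 0 < x i j ∧ x i j < 1),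
      (1 - x i j) * w i j ≤ Rq := by
    intro j hj
    simp only [Finset.mem_filter, Finset.mem_univ, true_and] at hj
    have h1 : (1 - x i j) * w i j ≤ 1 * w i j := by
      apply mul_le_mul_of_nonneg_right _ (hw0 j); linarith [hx0 j]
    calc (1 - x i j) * w i j ≤ 1 * w i j := h1
      _ = w i j := one_mul _
      _ ≤ Rq := hwR j hj.1
  calc ∑ j ∈ Finset.univ.filter (fun j => 0 < x i j ∧ x i j < 1), (1 - x i j) * w i j
      ≤ (Finset.univ.filter (fun j => 0 < x i j ∧ x i j < 1)).card • Rq :=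
        Finset.sum_le_card_nsmul _ _ _ hterm
    _ = (degM x i : ℝ) * Rq := by rw [nsmul_eq_mul]; rfl
    _ ≤ 2 * Rq := by
        apply mul_le_mul_of_nonneg_right _ hRq
        exact_mod_cast hdeg

lemma Gfun_le (w x : I → J → ℝ) (Rq : ℝ) (i : I)
    (hRq : 0 ≤ Rq)
    (hx0 : ∀ j, 0 ≤ x i j) (hx1 : ∀ j, x i j ≤ 1)
    (hw0 : ∀ j, 0 ≤ w i j)
    (hwR : ∀ j, 0 < x i j → w i j ≤ Rq) :
    Gfun w Rq x i ≤ (∑ j, x i j * w i j) + 2 * Rq := by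
  unfold Gfun
  split_ifs with h
  · rw [sum_pos_w_eq w x i hx0 hx1]
    have := frac_fiber_sum_le w x Rq i hRq hx0 hx1 hw0 hwR h
    linarith
  · exact le_refl _

lemma exists_pos_of_sum_one (x : I → J → ℝ) (hx0 : ∀ i j, 0 ≤ x i j)
    (hcol : ∀ j, ∑ i, x i j = 1) (j : J) : ∃ i, 0 < x i j := by
  by_contra h
  push_neg at h
  have : ∑ i, x i j = 0 := Finset.sum_eq_zero (fun i _ => le_antisymm (h i) (hx0 i j))
  rw [hcol j] at this
  norm_num at this

/-- Base-ish case: whenever every machine has at most 2 fractional entries...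
actually used when we just bound the load by the support sum. -/
lemma support_choice (w x : I → J → ℝ) (Rq : ℝ)
    (hx0 : ∀ i j, 0 ≤ x i j)
    (hcol : ∀ j, ∑ i, x i j = 1)
    (hw0 : ∀ i j, 0 ≤ w i j)
    (hdeg : ∀ i, degM x i ≤ 2) :
    ∃ σ : J → I, (∀ j, 0 < x (σ j) j) ∧
      ∀ i, ∑ j ∈ Finset.univ.filter (fun j => σ j = i), w i j ≤ Gfun w Rq x i := by
  choose σ hσ using fun j => exists_pos_of_sum_one x hx0 hcol j
  refine ⟨σ, hσ, fun i => ?_⟩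
  have hsub : Finset.univ.filter (fun j => σ j = i)
      ⊆ Finset.univ.filter (fun j => 0 < x i j) := by
    intro j hj
    simp only [Finset.mem_filter, Finset.mem_univ, true_and] at hj ⊢
    rw [← hj]; exact hσ j
  have := Finset.sum_le_sum_of_subset_of_nonneg hsub (fun j _ _ => hw0 i j)
  unfold Gfun
  rw [if_pos (hdeg i)]
  exact this

lemma two_le_fiberJ (x : I → J → ℝ)
    (hx0 : ∀ i j, 0 ≤ x i j) (hx1 : ∀ i j, x i j ≤ 1)
    (hcol : ∀ j, ∑ i, x i j = 1) (j : J) (i0 : I) (h0 : (i0, j) ∈ fracSet x) :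
    2 ≤ (Finset.univ.filter (fun i => (i, j) ∈ fracSet x)).card := by
  rw [mem_fracSet] at h0
  -- find another fractional machine
  by_contra hcard
  push_neg at hcard
  -- so every i ≠ i0 has integral x i j
  have hint : ∀ i, i ≠ i0 → x i j = 0 ∨ x i j = 1 := by
    intro i hi
    by_contra hni
    push_neg at hni
    have hfi : (i, j) ∈ fracSet x := by
      rw [mem_fracSet]
      constructor
      · exact lt_of_le_of_ne (hx0 i j) (Ne.symm hni.1)
      · exact lt_of_le_of_ne (hx1 i j) hni.2
    have h2 : 1 < (Finset.univ.filter (fun i => (i, j) ∈ fracSet x)).card := by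
      rw [Finset.one_lt_card]
      exact ⟨i, by simp [hfi], i0, by simp [h0, mem_fracSet], hi⟩
    omega
  have hsum : ∑ i ∈ Finset.univ.erase i0, x i j
      = ((Finset.univ.erase i0).filter (fun i => x i j = 1)).card := by
    rw [Finset.card_filter]
    push_cast
    apply Finset.sum_congr rfl
    intro i hi
    rcases hint i (Finset.ne_of_mem_erase hi) with h | h <;> simp [h]
  have hsplit : ∑ i, x i j = x i0 j + ∑ i ∈ Finset.univ.erase i0, x i j := by
    rw [← Finset.sum_erase_add _ _ (Finset.mem_univ i0)]; ring
  have h1 : x i0 j = 1 - ((Finset.univ.erase i0).filter (fun i => x i j = 1)).card := by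
    have := hcol j
    rw [hsplit, hsum] at this
    linarith
  set n := ((Finset.univ.erase i0).filter (fun i => x i j = 1)).card with hn
  have hpos : (0:ℝ) < 1 - n := by rw [← h1]; exact h0.1
  have : (n:ℝ) < 1 := by linarith
  have hn0 : n = 0 := by exact_mod_cast Nat.lt_one_iff.1 (by exact_mod_cast this)
  rw [hn0] at h1
  simp at h1
  exact absurd h1 (ne_of_lt h0.2)

lemma card_frac_eq_sum_jobs (x : I → J → ℝ) :
    (fracSet x).card = ∑ j, (Finset.univ.filter (fun i => (i, j) ∈ fracSet x)).card := by
  rw [Finset.card_eq_sum_card_fiberwise (f := Prod.snd) (t := Finset.univ)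
    (fun e _ => Finset.mem_univ e.2)]
  apply Finset.sum_congr rfl
  intro j _
  apply Finset.card_bij (fun e _ => e.1)
  · intro e he
    simp only [Finset.mem_filter] at he ⊢
    have : e = (e.1, j) := by
      rw [← he.2]
    rw [← this]
    exact ⟨Finset.mem_univ _, he.1⟩
  · intro a ha b hb hab
    simp only [Finset.mem_filter] at ha hb
    ext
    · exact hab
    · rw [ha.2, hb.2]
  · intro i hi
    simp only [Finset.mem_filter, Finset.mem_univ, true_and] at hi
    exact ⟨(i, j), by simp [hi], rfl⟩

lemma card_frac_eq_sum_machines (x : I → J → ℝ) :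
    (fracSet x).card = ∑ i, degM x i := by
  rw [Finset.card_eq_sum_card_fiberwise (f := Prod.fst) (t := Finset.univ)
    (fun e _ => Finset.mem_univ e.1)]
  apply Finset.sum_congr rfl
  intro i _
  apply Finset.card_bij (fun e _ => e.2)
  · intro e he
    simp only [Finset.mem_filter, Finset.mem_univ, true_and] at he ⊢
    have h := he.1
    rw [mem_fracSet] at h
    rw [he.2] at h
    exact h
  · intro a ha b hb hab
    simp only [Finset.mem_filter] at ha hb
    ext
    · rw [ha.2, hb.2]
    · exact hab
  · intro j hj
    simp only [Finset.mem_filter, Finset.mem_univ, true_and] at hj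
    refine ⟨(i, j), ?_, rfl⟩
    simp [Finset.mem_filter, mem_fracSet, hj]

lemma exists_null_dir (w x : I → J → ℝ)
    (hx0 : ∀ i j, 0 ≤ x i j) (hx1 : ∀ i j, x i j ≤ 1)
    (hcol : ∀ j, ∑ i, x i j = 1)
    (hne : (fracSet x).Nonempty) :
    ∃ D : I × J → ℝ, (∀ e, e ∉ fracSet x → D e = 0) ∧ (∃ e, D e ≠ 0) ∧
      (∀ j, ∑ i, D (i, j) = 0) ∧
      (∀ i, 3 ≤ degM x i → ∑ j, w i j * D (i, j) = 0) := by
  classical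
  set F := fracSet x with hF
  set Jf : Finset J := Finset.univ.filter (fun j => ∃ i, (i, j) ∈ F) with hJf
  set Mp : Finset I := Finset.univ.filter (fun i => 3 ≤ degM x i) with hMp
  -- counting
  have hcard2 : 2 * Jf.card ≤ F.card := by
    rw [card_frac_eq_sum_jobs]
    calc 2 * Jf.card = ∑ _j ∈ Jf, 2 := by rw [Finset.sum_const, smul_eq_mul]; ring
      _ ≤ ∑ j ∈ Jf, (Finset.univ.filter (fun i => (i, j) ∈ F)).card := by
          apply Finset.sum_le_sum
          intro j hj
          simp only [hJf, Finset.mem_filter, Finset.mem_univ, true_and] at hj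
          obtain ⟨i0, hi0⟩ := hj
          exact two_le_fiberJ x hx0 hx1 hcol j i0 hi0
      _ ≤ ∑ j, (Finset.univ.filter (fun i => (i, j) ∈ F)).card :=
          Finset.sum_le_sum_of_subset (Finset.subset_univ _)
  have hcard3 : 3 * Mp.card ≤ F.card := by
    rw [card_frac_eq_sum_machines]
    calc 3 * Mp.card = ∑ _i ∈ Mp, 3 := by rw [Finset.sum_const, smul_eq_mul]; ring
      _ ≤ ∑ i ∈ Mp, degM x i := by
          apply Finset.sum_le_sum
          intro i hi
          simp only [hMp, Finset.mem_filter, Finset.mem_univ, true_and] at hi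
          exact hi
      _ ≤ ∑ i, degM x i := Finset.sum_le_sum_of_subset (Finset.subset_univ _)
  have hFpos : 1 ≤ F.card := hne.card_pos
  have hlt : Jf.card + Mp.card < F.card := by omega
  -- linear algebra
  let coefJ : Jf → (F → ℝ) := fun j e => if (e : I × J).2 = (j : J) then (1:ℝ) else 0
  let coefM : Mp → (F → ℝ) := fun i e => if (e : I × J).1 = (i : I) then w (i : I) (e : I × J).2 else 0
  let Φ : (F → ℝ) →ₗ[ℝ] ((Jf → ℝ) × (Mp → ℝ)) :=
    LinearMap.prod
      (LinearMap.pi fun j => ∑ e : F, coefJ j e • LinearMap.proj e)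
      (LinearMap.pi fun i => ∑ e : F, coefM i e • LinearMap.proj e)
  have hnotinj : ¬ Function.Injective Φ := by
    intro hinj
    have h1 := LinearMap.finrank_le_finrank_of_injective hinj
    rw [Module.finrank_pi ℝ, Module.finrank_prod, Module.finrank_pi ℝ, Module.finrank_pi ℝ,
      Fintype.card_coe, Fintype.card_coe, Fintype.card_coe] at h1
    omega
  rw [Function.not_injective_iff] at hnotinj
  obtain ⟨a, b, hab, hne'⟩ := hnotinj
  set v : F → ℝ := a - b with hv
  have hΦv : Φ v = 0 := by
    rw [hv, map_sub, hab, sub_self]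
  have hvne : v ≠ 0 := sub_ne_zero_of_ne hne'
  -- extend
  set D : I × J → ℝ := fun e => if h : e ∈ F then v ⟨e, h⟩ else 0 with hD
  have happJ : ∀ j : Jf, ∑ e : F, coefJ j e * v e = 0 := by
    intro j
    have := congrFun (congrArg Prod.fst hΦv) j
    simpa [Φ, LinearMap.pi_apply, LinearMap.sum_apply, smul_eq_mul] using this
  have happM : ∀ i : Mp, ∑ e : F, coefM i e * v e = 0 := by
    intro i
    have := congrFun (congrArg Prod.snd hΦv) i
    simpa [Φ, LinearMap.pi_apply, LinearMap.sum_apply, smul_eq_mul] using this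
  have hDv : ∀ (e : F), D (e : I × J) = v e := by
    intro e
    rw [hD]
    simp only [e.2, dif_pos]
  refine ⟨D, ?_, ?_, ?_, ?_⟩
  · intro e he; rw [hD]; simp [he]
  · obtain ⟨e, he⟩ := Function.ne_iff.1 hvne
    exact ⟨e, by rw [hDv e]; simpa using he⟩
  · intro j
    by_cases hj : j ∈ Jf
    · have h0 := happJ ⟨j, hj⟩
      have hstep : ∑ e : F, coefJ ⟨j, hj⟩ e * v e
          = ∑ e ∈ F, (if e.2 = j then D e else 0) := by
        rw [← Finset.sum_coe_sort F (fun e => if e.2 = j then D e else 0)]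
        apply Finset.sum_congr rfl
        intro e _
        rw [hDv e]
        simp only [coefJ]
        split_ifs <;> simp
      have hstep2' : ∑ e ∈ F, (if e.2 = j then D e else 0)
          = ∑ e ∈ (Finset.univ : Finset (I × J)), (if e.2 = j then D e else 0) := by
        apply Finset.sum_subset (Finset.subset_univ _)
        intro e _ he
        have : D e = 0 := by rw [hD]; simp [he]
        simp [this]
      have hstep3 : ∑ e ∈ (Finset.univ : Finset (I × J)), (if e.2 = j then D e else 0)
          = ∑ i, D (i, j) := by
        rw [Fintype.sum_prod_type]
        apply Finset.sum_congr rfl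
        intro i _
        simp
      rw [← hstep3, ← hstep2', ← hstep, h0]
    · apply Finset.sum_eq_zero
      intro i _
      rw [hD]
      have : (i, j) ∉ F := by
        intro hmem
        exact hj (by simp only [hJf, Finset.mem_filter, Finset.mem_univ, true_and]; exact ⟨i, hmem⟩)
      simp [this]
  · intro i hdeg
    have hi : i ∈ Mp := by simp only [hMp, Finset.mem_filter, Finset.mem_univ, true_and]; exact hdeg
    have h0 := happM ⟨i, hi⟩
    have hstep : ∑ e : F, coefM ⟨i, hi⟩ e * v e
        = ∑ e ∈ F, (if e.1 = i then w i e.2 * D e else 0) := by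
      rw [← Finset.sum_coe_sort F (fun e => if e.1 = i then w i e.2 * D e else 0)]
      apply Finset.sum_congr rfl
      intro e _
      rw [hDv e]
      simp only [coefM]
      split_ifs <;> simp
    have hstep2 : ∑ e ∈ F, (if e.1 = i then w i e.2 * D e else 0)
        = ∑ e ∈ (Finset.univ : Finset (I × J)), (if e.1 = i then w i e.2 * D e else 0) := by
      apply Finset.sum_subset (Finset.subset_univ _)
      intro e _ he
      have : D e = 0 := by rw [hD]; simp [he]
      simp [this]
    have hstep3 : ∑ e ∈ (Finset.univ : Finset (I × J)), (if e.1 = i then w i e.2 * D e else 0)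
        = ∑ j, w i j * D (i, j) := by
      rw [Fintype.sum_prod_type]
      rw [Finset.sum_eq_single i]
      · simp
      · intro b _ hb
        apply Finset.sum_eq_zero
        intro y _
        simp [hb]
      · intro h
        exact absurd (Finset.mem_univ i) h
    rw [← hstep3, ← hstep2, ← hstep, h0]


lemma G_mono (w : I → J → ℝ) (Rq : ℝ) (x x' : I → J → ℝ)
    (hRq : 0 ≤ Rq) (hw0 : ∀ i j, 0 ≤ w i j)
    (hx'0 : ∀ i j, 0 ≤ x' i j) (hx'1 : ∀ i j, x' i j ≤ 1)
    (hfrac : fracSet x' ⊆ fracSet x)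
    (hsupp : ∀ i j, 0 < x' i j → 0 < x i j)
    (hload : ∀ i, 3 ≤ degM x i → ∑ j, x' i j * w i j = ∑ j, x i j * w i j)
    (hwR' : ∀ i j, 0 < x' i j → w i j ≤ Rq) (i : I) :
    Gfun w Rq x' i ≤ Gfun w Rq x i := by
  have hdegmono : degM x' i ≤ degM x i := by
    apply Finset.card_le_card
    intro j hj
    simp only [Finset.mem_filter, Finset.mem_univ, true_and] at hj ⊢
    have hm : (i, j) ∈ fracSet x' := by rw [mem_fracSet]; exact hj
    have := hfrac hm
    rwa [mem_fracSet] at this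
  unfold Gfun
  by_cases hd : degM x i ≤ 2
  · rw [if_pos hd, if_pos (le_trans hdegmono hd)]
    apply Finset.sum_le_sum_of_subset_of_nonneg
    · intro j hj
      simp only [Finset.mem_filter, Finset.mem_univ, true_and] at hj ⊢
      exact hsupp i j hj
    · intro j _ _; exact hw0 i j
  · rw [if_neg hd]
    by_cases hd' : degM x' i ≤ 2
    · rw [if_pos hd']
      rw [sum_pos_w_eq w x' i (hx'0 i) (hx'1 i)]
      have h2 := frac_fiber_sum_le w x' Rq i hRq (hx'0 i) (hx'1 i) (hw0 i)
        (fun j hj => hwR' i j hj) hd'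
      have h3 := hload i (by omega)
      linarith
    · rw [if_neg hd', hload i (by omega)]

lemma move_step (w x : I → J → ℝ)
    (hx0 : ∀ i j, 0 ≤ x i j) (hx1 : ∀ i j, x i j ≤ 1)
    (hcol : ∀ j, ∑ i, x i j = 1)
    (hne : (fracSet x).Nonempty) :
    ∃ x' : I → J → ℝ,
      (∀ i j, 0 ≤ x' i j) ∧ (∀ i j, x' i j ≤ 1) ∧
      (∀ j, ∑ i, x' i j = 1) ∧
      (∀ i j, 0 < x' i j → 0 < x i j) ∧
      fracSet x' ⊆ fracSet x ∧
      (fracSet x').card < (fracSet x).card ∧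
      (∀ i, 3 ≤ degM x i → ∑ j, x' i j * w i j = ∑ j, x i j * w i j) := by
  classical
  obtain ⟨D, hDsupp, ⟨e1, he1⟩, hDcol, hDload⟩ := exists_null_dir w x hx0 hx1 hcol hne
  have hDF : ∀ e, D e ≠ 0 → e ∈ fracSet x := by
    intro e he
    by_contra h
    exact he (hDsupp e h)
  set S : Finset (I × J) := (fracSet x).filter (fun e => D e ≠ 0) with hS
  have hSne : S.Nonempty := ⟨e1, by simp only [hS, Finset.mem_filter]; exact ⟨hDF e1 he1, he1⟩⟩
  set b : I × J → ℝ := fun e => if 0 < D e then (1 - x e.1 e.2) / D e else x e.1 e.2 / (-D e)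
    with hb
  obtain ⟨e0, he0S, hmin⟩ := Finset.exists_min_image S b hSne
  have hbpos : ∀ e ∈ S, 0 < b e := by
    intro e heS
    simp only [hS, Finset.mem_filter] at heS
    obtain ⟨heF, heD⟩ := heS
    rw [mem_fracSet] at heF
    simp only [hb]
    split_ifs with hp
    · exact div_pos (by linarith [heF.2]) hp
    · exact div_pos heF.1 (by rcases lt_or_gt_of_ne heD with h | h <;> [linarith; exact absurd h hp])
  set t : ℝ := b e0 with htdef
  have ht : 0 < t := hbpos e0 he0S
  set x' : I → J → ℝ := fun i j => x i j + t * D (i, j) with hx'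
  have hmem0 : e0 ∈ fracSet x ∧ D e0 ≠ 0 := by
    have h := he0S
    rw [hS, Finset.mem_filter] at h
    exact h
  -- bounds
  have hbounds : ∀ i j, 0 ≤ x' i j ∧ x' i j ≤ 1 := by
    intro i j
    by_cases hD0 : D (i, j) = 0
    · rw [hx']
      simp only [hD0, mul_zero, add_zero]
      exact ⟨hx0 i j, hx1 i j⟩
    · have heS : (i, j) ∈ S := by
        simp only [hS, Finset.mem_filter]
        exact ⟨hDF _ hD0, hD0⟩
      have htle : t ≤ b (i, j) := hmin _ heS
      have heF := hDF _ hD0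
      rw [mem_fracSet] at heF
      simp only [hx']
      rcases lt_or_gt_of_ne hD0 with hneg | hpos
      · -- D < 0
        have hble : b (i, j) * D (i, j) ≤ t * D (i, j) :=
          mul_le_mul_of_nonpos_right htle (le_of_lt hneg)
        have hbeq : b (i, j) * D (i, j) = - x i j := by
          simp only [hb]
          rw [if_neg (by linarith)]
          rw [div_neg, neg_mul, neg_eq_iff_eq_neg, neg_neg, div_mul_eq_mul_div,
            mul_div_assoc, div_self hD0, mul_one]
        constructor
        · rw [hbeq] at hble; linarith [heF.1]
        · nlinarith [heF.2, mul_pos ht (neg_pos.2 hneg)]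
      · -- D > 0
        have hble : t * D (i, j) ≤ b (i, j) * D (i, j) :=
          mul_le_mul_of_nonneg_right htle (le_of_lt hpos)
        have hbeq : b (i, j) * D (i, j) = 1 - x i j := by
          simp only [hb]
          rw [if_pos hpos]
          field_simp
        constructor
        · nlinarith [heF.1, mul_pos ht hpos]
        · rw [hbeq] at hble; linarith
  have hx'0 : ∀ i j, 0 ≤ x' i j := fun i j => (hbounds i j).1
  have hx'1 : ∀ i j, x' i j ≤ 1 := fun i j => (hbounds i j).2
  -- column sums
  have hcol' : ∀ j, ∑ i, x' i j = 1 := by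
    intro j
    simp only [hx']
    rw [Finset.sum_add_distrib, ← Finset.mul_sum, hDcol j, mul_zero, add_zero, hcol j]
  -- support
  have hsupp' : ∀ i j, 0 < x' i j → 0 < x i j := by
    intro i j h
    by_cases hD0 : D (i, j) = 0
    · rw [hx'] at h; simp only [hD0, mul_zero, add_zero] at h; exact h
    · exact (mem_fracSet.1 (hDF _ hD0)).1
  -- frac subset
  have hfracsub : fracSet x' ⊆ fracSet x := by
    intro e he
    rw [mem_fracSet] at he
    by_cases hD0 : D e = 0
    · rw [mem_fracSet]
      rw [hx'] at he
      simp only [Prod.mk.eta, hD0, mul_zero, add_zero] at he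
      exact he
    · exact hDF _ hD0
  -- e0 becomes integral
  have hhit : x' e0.1 e0.2 = 1 ∨ x' e0.1 e0.2 = 0 := by
    have hD0 := hmem0.2
    simp only [hx', Prod.mk.eta]
    rw [htdef]
    simp only [hb]
    by_cases hpos : 0 < D e0
    · left
      rw [if_pos hpos]
      field_simp
      ring
    · right
      rw [if_neg hpos]
      have hneg : D e0 < 0 := by
        rcases lt_or_gt_of_ne hD0 with h | h
        · exact h
        · exact absurd h hpos
      rw [div_neg, neg_mul, div_mul_cancel₀ _ hD0]
      ring
  have he0notin : e0 ∉ fracSet x' := by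
    rw [mem_fracSet]
    rcases hhit with h | h <;> rw [h] <;> simp
  have hcardlt : (fracSet x').card < (fracSet x).card := by
    apply Finset.card_lt_card
    rw [Finset.ssubset_iff_of_subset hfracsub]
    exact ⟨e0, hmem0.1, he0notin⟩
  -- loads preserved for protected machines
  have hload' : ∀ i, 3 ≤ degM x i → ∑ j, x' i j * w i j = ∑ j, x i j * w i j := by
    intro i hdeg
    have h := hDload i hdeg
    simp only [hx']
    have : ∑ j, (x i j + t * D (i, j)) * w i j
        = (∑ j, x i j * w i j) + t * ∑ j, w i j * D (i, j) := by
      rw [Finset.mul_sum, ← Finset.sum_add_distrib]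
      apply Finset.sum_congr rfl
      intro j _
      ring
    rw [this, h, mul_zero, add_zero]
  exact ⟨x', hx'0, hx'1, hcol', hsupp', hfracsub, hcardlt, hload'⟩

lemma round_lemma (w : I → J → ℝ) (Rq : ℝ) (hRq : 0 ≤ Rq) (hw0 : ∀ i j, 0 ≤ w i j) :
    ∀ n : ℕ, ∀ x : I → J → ℝ,
      (∀ i j, 0 ≤ x i j) → (∀ i j, x i j ≤ 1) →
      (∀ j, ∑ i, x i j = 1) →
      (∀ i j, 0 < x i j → w i j ≤ Rq) →
      (fracSet x).card ≤ n →
      ∃ σ : J → I, (∀ j, 0 < x (σ j) j) ∧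
        ∀ i, ∑ j ∈ Finset.univ.filter (fun j => σ j = i), w i j ≤ Gfun w Rq x i := by
  intro n
  induction n with
  | zero =>
    intro x hx0 hx1 hcol hwR hcard
    apply support_choice w x Rq hx0 hcol hw0
    intro i
    have h1 : degM x i ≤ ∑ i', degM x i' :=
      Finset.single_le_sum (fun _ _ => Nat.zero_le _) (Finset.mem_univ i)
    rw [← card_frac_eq_sum_machines] at h1
    omega
  | succ n ih =>
    intro x hx0 hx1 hcol hwR hcard
    by_cases hne : (fracSet x).Nonempty
    · obtain ⟨x', hx'0, hx'1, hcol', hsupp', hfracsub, hcardlt, hload'⟩ :=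
        move_step w x hx0 hx1 hcol hne
      have hwR' : ∀ i j, 0 < x' i j → w i j ≤ Rq := fun i j h => hwR i j (hsupp' i j h)
      obtain ⟨σ, hσ, hloadσ⟩ := ih x' hx'0 hx'1 hcol' hwR' (by omega)
      refine ⟨σ, fun j => hsupp' _ _ (hσ j), fun i => le_trans (hloadσ i) ?_⟩
      exact G_mono w Rq x x' hRq hw0 hx'0 hx'1 hfracsub hsupp' hload' hwR' i
    · rw [Finset.not_nonempty_iff_eq_empty] at hne
      apply support_choice w x Rq hx0 hcol hw0
      intro i
      have h1 : degM x i ≤ ∑ i', degM x i' :=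
        Finset.single_le_sum (fun _ _ => Nat.zero_le _) (Finset.mem_univ i)
      rw [← card_frac_eq_sum_machines, hne, Finset.card_empty] at h1
      omega


end Rounding

/-- **Rounding guarantee for Top_ℓ^{(q)} Max-Norm Makespan.**
Given a feasible fractional solution `x` of the LP relaxation `LB(R,B,T)`,
there exists an integral assignment `σ` using only job-machine pairs of size at most `R`,
whose `Top_ℓ^{(q)}` value on each machine is at most `(2R^q + B^q + ℓ·T^q)^{1/q}`. -/
theorem maxnorm_makespan_topq_rounding
    (M : ℕ) (hM : 1 ≤ M) (J : Type) [Fintype J]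
    (p : Fin M → J → ℝ) (hp : ∀ i j, 0 ≤ p i j)
    (q : ℝ) (hq : 1 ≤ q) (ℓ : ℕ) (hℓ : 1 ≤ ℓ)
    (R B T : ℝ) (hR : 0 ≤ R) (hB : 0 ≤ B) (hT : 0 ≤ T)
    (x : Fin M → J → ℝ)
    (hx01 : ∀ i j, x i j ∈ Set.Icc (0 : ℝ) 1)
    (hx1 : ∀ j, ∑ i, x i j = 1)
    (hxR : ∀ i j, R < p i j → x i j = 0)
    (hxℓ : ∀ i, ∑ j ∈ Finset.univ.filter (fun j => T ≤ p i j), x i j ≤ (ℓ : ℝ))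
    (hxB : ∀ i, ∑ j ∈ Finset.univ.filter (fun j => T ≤ p i j),
        x i j * p i j ^ q ≤ B ^ q) :
    ∃ σ : J → Fin M,
      (∀ j, p (σ j) j ≤ R) ∧
      ∀ i : Fin M, ∀ T' : Finset J, (∀ j ∈ T', σ j = i) → T'.card ≤ ℓ →
        ∑ j ∈ T', p i j ^ q ≤ 2 * R ^ q + B ^ q + (ℓ : ℝ) * T ^ q := by
  classical
  set w : Fin M → J → ℝ := fun i j => if T ≤ p i j then p i j ^ q else 0 with hw
  have hq0 : (0:ℝ) ≤ q := by linarith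
  have hRq0 : 0 ≤ R ^ q := Real.rpow_nonneg hR q
  have hTq0 : 0 ≤ T ^ q := Real.rpow_nonneg hT q
  have hw0 : ∀ i j, 0 ≤ w i j := by
    intro i j
    simp only [hw]
    split_ifs
    · exact Real.rpow_nonneg (hp i j) q
    · exact le_refl 0
  have hx0 : ∀ i j, 0 ≤ x i j := fun i j => (hx01 i j).1
  have hx1' : ∀ i j, x i j ≤ 1 := fun i j => (hx01 i j).2
  have hpr : ∀ i j, 0 < x i j → p i j ≤ R := by
    intro i j h
    by_contra hc
    push_neg at hc
    rw [hxR i j hc] at h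
    exact lt_irrefl 0 h
  have hwR : ∀ i j, 0 < x i j → w i j ≤ R ^ q := by
    intro i j h
    simp only [hw]
    split_ifs
    · exact Real.rpow_le_rpow (hp i j) (hpr i j h) hq0
    · exact hRq0
  obtain ⟨σ, hσ, hload⟩ := round_lemma w (R ^ q) hRq0 hw0 (fracSet x).card x
    hx0 hx1' hx1 hwR le_rfl
  refine ⟨σ, fun j => hpr _ _ (hσ j), ?_⟩
  intro i T' hT' hcardT'
  have hG : Gfun w (R ^ q) x i ≤ B ^ q + 2 * R ^ q := by
    have h1 := Gfun_le w x (R ^ q) i hRq0 (fun j => hx0 i j) (fun j => hx1' i j)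
      (fun j => hw0 i j) (fun j => hwR i j)
    have h2 : ∑ j, x i j * w i j
        = ∑ j ∈ Finset.univ.filter (fun j => T ≤ p i j), x i j * p i j ^ q := by
      rw [Finset.sum_filter]
      apply Finset.sum_congr rfl
      intro j _
      simp only [hw]
      split_ifs <;> simp
    rw [h2] at h1
    linarith [hxB i]
  have hterm : ∀ j ∈ T', p i j ^ q ≤ w i j + T ^ q := by
    intro j _
    simp only [hw]
    split_ifs with h
    · linarith
    · push_neg at h
      have := Real.rpow_le_rpow (hp i j) h.le hq0
      linarith
  have hsum1 : ∑ j ∈ T', p i j ^ q ≤ ∑ j ∈ T', (w i j + T ^ q) := Finset.sum_le_sum hterm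
  have hsum2 : ∑ j ∈ T', (w i j + T ^ q) = (∑ j ∈ T', w i j) + T'.card * T ^ q := by
    rw [Finset.sum_add_distrib, Finset.sum_const, nsmul_eq_mul]
  have hsub : T' ⊆ Finset.univ.filter (fun j => σ j = i) := by
    intro j hj
    simp only [Finset.mem_filter, Finset.mem_univ, true_and]
    exact hT' j hj
  have hsum3 : ∑ j ∈ T', w i j ≤ ∑ j ∈ Finset.univ.filter (fun j => σ j = i), w i j :=
    Finset.sum_le_sum_of_subset_of_nonneg hsub (fun j _ _ => hw0 i j)
  have hcard : (T'.card : ℝ) * T ^ q ≤ (ℓ : ℝ) * T ^ q := by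
    apply mul_le_mul_of_nonneg_right _ hTq0
    exact_mod_cast hcardT'
  have hl := hload i
  rw [Finset.filter_congr_decidable] at hl
  calc ∑ j ∈ T', p i j ^ q ≤ ∑ j ∈ T', (w i j + T ^ q) := hsum1
    _ = (∑ j ∈ T', w i j) + T'.card * T ^ q := hsum2
    _ ≤ (∑ j ∈ Finset.univ.filter (fun j => σ j = i), w i j) + (ℓ : ℝ) * T ^ q :=
        add_le_add hsum3 hcard
    _ ≤ (B ^ q + 2 * R ^ q) + (ℓ : ℝ) * T ^ q :=
        add_le_add (le_trans hl hG) (le_refl _)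
    _ = 2 * R ^ q + B ^ q + (ℓ : ℝ) * T ^ q := by ring
end

section
/- Let M ≥ 1 and let J be a finite set of jobs with processing times p(i,j) ≥ 0 for each machine i ∈ {1,…,M} and job j ∈ J. Let q ≥ 1 be a real number, ℓ ≥ 1 an integer, R, B, T ≥ 0 reals, and α : {1,…,M} → ℝ≥0 machine weights. Suppose x : {1,…,M} × J → [0,1] satisfies: (i) Σ_{i=1}^{M} x_{ij} = 1 for every j ∈ J; (ii) x_{ij} = 0 whenever p(i,j) > R; (iii) Σ_{j : p(i,j) ≥ T} x_{ij} ≤ ℓ for every i; (iv) Σ_{j : p(i,j) ≥ T} x_{ij}·p(i,j)^q ≤ B^q for every i. Then there exists an assignment σ : J → {1,…,M} such that p(σ(j), j) ≤ R for every j, such that Σ_{i=1}^{M} α_i·|σ^{-1}(i)| ≤ Σ_{i=1}^{M} α_i·Σ_{j ∈ J} x_{ij}, and such that for every machine i and every subset T' ⊆ σ^{-1}(i) with |T'| ≤ ℓ one has Σ_{j ∈ T'} p(i,j)^q ≤ 2R^q + B^q + ℓ·T^q. -/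
open Finset

private noncomputable def rclamp (lo hi t : ℝ) : ℝ := min (max t lo) hi

private lemma rclamp_le (lo hi t : ℝ) : rclamp lo hi t ≤ hi := min_le_right _ _

private lemma le_rclamp (lo hi t : ℝ) (h : lo ≤ hi) : lo ≤ rclamp lo hi t :=
  le_min (le_max_right _ _) h

private lemma rclamp_mono (lo hi : ℝ) {t t' : ℝ} (h : t ≤ t') :
    rclamp lo hi t ≤ rclamp lo hi t' :=
  min_le_min (max_le_max h le_rfl) le_rfl

private lemma rclamp_of_le {lo hi t : ℝ} (h : t ≤ lo) (h2 : lo ≤ hi) : rclamp lo hi t = lo := by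
  rw [rclamp, max_eq_right h, min_eq_left h2]

private lemma rclamp_of_ge {lo hi t : ℝ} (h : hi ≤ t) (h2 : lo ≤ hi) : rclamp lo hi t = hi := by
  rw [rclamp, max_eq_left (h2.trans h), min_eq_right h]

private lemma rclamp_eq_self {lo hi t : ℝ} (h1 : lo ≤ t) (h2 : t ≤ hi) : rclamp lo hi t = t := by
  rw [rclamp, max_eq_left h1, min_eq_left h2]

private lemma lt_of_rclamp_lt {lo hi t : ℝ} (h : rclamp lo hi t < hi) : t < hi := by
  by_contra hc
  push_neg at hc
  have heq : rclamp lo hi t = hi := min_eq_right (le_trans hc (le_max_left t lo))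
  rw [heq] at h
  exact lt_irrefl _ h

private lemma lt_of_rclamp_lt' {lo hi t t' : ℝ} (h : rclamp lo hi t < rclamp lo hi t') :
    lo < t' := by
  by_contra hc
  push_neg at hc
  have h1 : rclamp lo hi t' = min lo hi := by rw [rclamp, max_eq_right hc]
  have h2 : min lo hi ≤ rclamp lo hi t := min_le_min (le_max_right t lo) le_rfl
  rw [h1] at h
  exact absurd h2 (not_le.2 h)

/-- Sum of clamp increments over unit intervals `[s, s+1]`, `s < n`, telescopes to `b - a`. -/
private lemma sum_rclamp_range (n : ℕ) : ∀ a b : ℝ, 0 ≤ a → a ≤ b → b ≤ n →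
    ∑ s ∈ Finset.range n, (rclamp s (s+1) b - rclamp s (s+1) a) = b - a := by
  induction n with
  | zero =>
    intro a b ha hab hbn
    simp only [Nat.cast_zero] at hbn
    have : a = b := le_antisymm hab (by linarith)
    simp [this]
  | succ n ih =>
    intro a b ha hab hbn
    have key : ∀ t : ℝ, ∀ s ∈ Finset.range n, rclamp s (s+1) t = rclamp s (s+1) (min t n) := by
      intro t s hs
      rcases le_total t n with h | h
      · rw [min_eq_left h]
      · have hsn : (s:ℝ) + 1 ≤ n := by
          have hs' := Finset.mem_range.1 hs
          exact_mod_cast Nat.succ_le_of_lt hs'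
        rw [min_eq_right h, rclamp_of_ge (le_trans hsn h) (by linarith),
          rclamp_of_ge hsn (by linarith)]
    rw [Finset.sum_range_succ]
    rw [Finset.sum_congr rfl (fun s hs => by rw [key b s hs, key a s hs])]
    rw [ih (min a n) (min b n) (le_min ha (by positivity)) (min_le_min hab le_rfl)
      (min_le_right _ _)]
    have hcast : ((n+1 : ℕ) : ℝ) = (n:ℝ) + 1 := by push_cast; ring
    rw [hcast] at hbn
    have h1 : rclamp n (n+1) b = max b n := by
      rw [rclamp, min_eq_left]
      exact max_le hbn (by linarith)
    have h2 : rclamp n (n+1) a = max a n := by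
      rw [rclamp, min_eq_left]
      exact max_le (by linarith) (by linarith)
    rw [h1, h2]
    have hb' : min b ↑n + max b ↑n = b + n := min_add_max b n
    have ha' : min a ↑n + max a ↑n = a + n := min_add_max a n
    linarith

/-- Telescoping a prefix-interval family over a downward-closed set. -/
private lemma telescope_sum {ι κ : Type*} [Fintype ι] [DecidableEq ι] [LinearOrder κ]
    (key : ι → κ) (hinj : Function.Injective key) (g : ι → ℝ) (h : ℝ → ℝ)
    (W : Finset ι) :
    ∀ A : Finset ι, A ⊆ W →
    (∀ j' ∈ A, ∀ j ∈ W, key j < key j' → j ∈ A) →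
    ∑ j ∈ A, (h ((∑ j' ∈ W.filter (fun j' => key j' < key j), g j') + g j)
             - h (∑ j' ∈ W.filter (fun j' => key j' < key j), g j'))
      = h (∑ j ∈ A, g j) - h 0 := by
  intro A
  induction A using Finset.strongInduction with
  | _ A ih =>
    intro hAW hdc
    rcases A.eq_empty_or_nonempty with rfl | hA
    · simp
    obtain ⟨j₀, hj₀A, hj₀max⟩ := Finset.exists_max_image A key hA
    have hfil : W.filter (fun j' => key j' < key j₀) = A.erase j₀ := by
      apply Finset.ext
      intro j
      simp only [Finset.mem_filter, Finset.mem_erase]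
      constructor
      · rintro ⟨hjW, hjlt⟩
        exact ⟨fun hej => by rw [hej] at hjlt; exact lt_irrefl _ hjlt,
          hdc j₀ hj₀A j hjW hjlt⟩
      · rintro ⟨hne, hjA⟩
        exact ⟨hAW hjA, lt_of_le_of_ne (hj₀max j hjA) (fun hk => hne (hinj hk))⟩
    have herase : A.erase j₀ ⊂ A := Finset.erase_ssubset hj₀A
    have hdc' : ∀ j' ∈ A.erase j₀, ∀ j ∈ W, key j < key j' → j ∈ A.erase j₀ := by
      intro j' hj' j hjW hlt
      rw [Finset.mem_erase] at hj' ⊢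
      have hjA := hdc j' hj'.2 j hjW hlt
      refine ⟨?_, hjA⟩
      intro hj
      rw [hj] at hlt
      exact absurd (hj₀max j' hj'.2) (not_le.2 hlt)
    have IH := ih (A.erase j₀) herase (Finset.Subset.trans (Finset.erase_subset _ _) hAW) hdc'
    rw [← Finset.add_sum_erase A _ hj₀A, ← Finset.add_sum_erase A g hj₀A]
    rw [IH, hfil, add_comm (g j₀) (∑ x ∈ A.erase j₀, g x)]
    ring
open Finset

private lemma exists_injective_matching {J S : Type*} [Fintype J] [Fintype S]
    [DecidableEq J] [DecidableEq S]
    (f : J → S → ℝ) (c : S → ℝ)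
    (h0 : ∀ j s, 0 ≤ f j s) (hrow : ∀ j, ∑ s, f j s = 1) (hcol : ∀ s, ∑ j, f j s ≤ 1) :
    ∃ m : J → S, Function.Injective m ∧ (∀ j, 0 < f j (m j)) ∧
      ∑ j, c (m j) ≤ ∑ j, ∑ s, f j s * c s := by
  classical
  rcases isEmpty_or_nonempty J with hJ | hJ
  · exact ⟨fun j => (hJ.false j).elim, fun j => (hJ.false j).elim,
      fun j => (hJ.false j).elim, by simp⟩
  have hS : Nonempty S := by
    by_contra hS
    have := hrow (Classical.arbitrary J)
    rw [not_nonempty_iff] at hS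
    simp at this
  -- the doubly stochastic matrix
  set A : Matrix (J ⊕ S) (J ⊕ S) ℝ := fun k k' =>
    match k, k' with
    | .inl j, .inr s => f j s
    | .inr s, .inl j => f j s
    | .inl _, .inl _ => 0
    | .inr s, .inr s' => if s = s' then 1 - ∑ j, f j s else 0
    with hA
  have hAmem : A ∈ doublyStochastic ℝ (J ⊕ S) := by
    rw [mem_doublyStochastic_iff_sum]
    refine ⟨?_, ?_, ?_⟩
    · rintro (j | s) (j' | s')
      · exact le_refl (0:ℝ)
      · exact h0 j s'
      · exact h0 j' s
      · show (0:ℝ) ≤ if s = s' then 1 - ∑ j, f j s else 0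
        split
        · linarith [hcol s]
        · exact le_rfl
    · rintro (j | s)
      · simp [hA, Fintype.sum_sum_type, hrow j]
      · simp [hA, Fintype.sum_sum_type, Finset.sum_ite_eq]
    · rintro (j | s)
      · simp [hA, Fintype.sum_sum_type, hrow j]
      · simp [hA, Fintype.sum_sum_type, Finset.sum_ite_eq']
  obtain ⟨w, hw0, hw1, hwA⟩ := exists_eq_sum_perm_of_mem_doublyStochastic hAmem
  have hent : ∀ k k', ∑ τ : Equiv.Perm (J ⊕ S), w τ * (τ.permMatrix ℝ) k k' = A k k' := by
    intro k k'
    have := congrFun (congrFun hwA k) k'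
    simpa [Matrix.sum_apply] using this
  have hPval : ∀ (τ : Equiv.Perm (J ⊕ S)) k k',
      (τ.permMatrix ℝ) k k' = if τ k = k' then 1 else 0 := by
    intro τ k k'
    simp [Equiv.Perm.permMatrix, PEquiv.toMatrix_apply, Equiv.toPEquiv_apply, eq_comm]
  have hsupp : ∀ τ, 0 < w τ → ∀ k k', A k k' = 0 → τ k ≠ k' := by
    intro τ hτ k k' hA0 hk
    have h1 : ∀ τ' : Equiv.Perm (J ⊕ S), 0 ≤ w τ' * (τ'.permMatrix ℝ) k k' := by
      intro τ'
      have : (0:ℝ) ≤ (τ'.permMatrix ℝ) k k' := by rw [hPval]; positivity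
      exact mul_nonneg (hw0 τ') this
    have h2 := (Finset.sum_eq_zero_iff_of_nonneg (fun τ' _ => h1 τ')).1
      ((hent k k').trans hA0) τ (mem_univ τ)
    rw [hPval, if_pos hk, mul_one] at h2
    exact hτ.ne' h2
  -- cost function on the sum type
  set c' : J ⊕ S → ℝ := Sum.elim (fun _ => 0) c with hc'
  have hrowP : ∀ (τ : Equiv.Perm (J ⊕ S)) (k : J ⊕ S),
      ∑ k', (τ.permMatrix ℝ) k k' * c' k' = c' (τ k) := by
    intro τ k
    rw [Finset.sum_congr rfl (fun k' _ => by rw [hPval])]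
    simp [Finset.sum_ite_eq]
  have havg : ∑ τ : Equiv.Perm (J ⊕ S), w τ * ∑ j, c' (τ (Sum.inl j))
      = ∑ j, ∑ s, f j s * c s := by
    calc ∑ τ : Equiv.Perm (J ⊕ S), w τ * ∑ j, c' (τ (Sum.inl j))
        = ∑ τ : Equiv.Perm (J ⊕ S), ∑ j, ∑ k', w τ * ((τ.permMatrix ℝ) (Sum.inl j) k' * c' k') := by
          refine Finset.sum_congr rfl fun τ _ => ?_
          rw [Finset.mul_sum]
          refine Finset.sum_congr rfl fun j _ => ?_
          rw [← hrowP τ (Sum.inl j), Finset.mul_sum]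
      _ = ∑ j, ∑ k', (∑ τ : Equiv.Perm (J ⊕ S), w τ * (τ.permMatrix ℝ) (Sum.inl j) k') * c' k' := by
          rw [Finset.sum_comm]
          refine Finset.sum_congr rfl fun j _ => ?_
          rw [Finset.sum_comm]
          refine Finset.sum_congr rfl fun k' _ => ?_
          rw [Finset.sum_mul]
          exact Finset.sum_congr rfl fun τ _ => by ring
      _ = ∑ j, ∑ k', A (Sum.inl j) k' * c' k' := by
          refine Finset.sum_congr rfl fun j _ => Finset.sum_congr rfl fun k' _ => ?_
          rw [hent]
      _ = ∑ j, ∑ s, f j s * c s := by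
          refine Finset.sum_congr rfl fun j _ => ?_
          rw [Fintype.sum_sum_type]
          simp [hA, hc']
  -- pick a cheap permutation in the support
  have hmin : ∃ τ : Equiv.Perm (J ⊕ S), 0 < w τ ∧
      ∑ j, c' (τ (Sum.inl j)) ≤ ∑ j, ∑ s, f j s * c s := by
    by_contra hcon
    push_neg at hcon
    obtain ⟨τ₁, -, hτ₁⟩ := Finset.exists_ne_zero_of_sum_ne_zero
      (s := (univ : Finset (Equiv.Perm (J ⊕ S)))) (f := w) (by rw [hw1]; norm_num)
    have hlt : ∑ τ : Equiv.Perm (J ⊕ S), w τ * (∑ j, ∑ s, f j s * c s)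
        < ∑ τ : Equiv.Perm (J ⊕ S), w τ * ∑ j, c' (τ (Sum.inl j)) := by
      refine Finset.sum_lt_sum (fun τ _ => ?_) ⟨τ₁, mem_univ _, ?_⟩
      · rcases (hw0 τ).lt_or_eq with h | h
        · exact mul_le_mul_of_nonneg_left (hcon τ h).le (hw0 τ)
        · rw [← h]; simp
      · have h := (hw0 τ₁).lt_of_ne' hτ₁
        exact mul_lt_mul_of_pos_left (hcon τ₁ h) h
    rw [← Finset.sum_mul, hw1, one_mul, havg] at hlt
    exact lt_irrefl _ hlt
  obtain ⟨τ₀, hτ₀, hcost⟩ := hmin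
  -- extract the matching
  have hms : ∀ j : J, ∃ s : S, τ₀ (Sum.inl j) = Sum.inr s := by
    intro j
    rcases h : τ₀ (Sum.inl j) with j' | s
    · exact absurd h (hsupp τ₀ hτ₀ (Sum.inl j) (Sum.inl j') rfl)
    · exact ⟨s, rfl⟩
  choose m hm using hms
  refine ⟨m, ?_, ?_, ?_⟩
  · intro j j' hjj'
    have : τ₀ (Sum.inl j) = τ₀ (Sum.inl j') := by rw [hm, hm, hjj']
    simpa using τ₀.injective this
  · intro j
    have hne : A (Sum.inl j) (Sum.inr (m j)) ≠ 0 := by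
      intro h0'
      exact hsupp τ₀ hτ₀ (Sum.inl j) (Sum.inr (m j)) h0' (hm j)
    have hAe : A (Sum.inl j) (Sum.inr (m j)) = f j (m j) := rfl
    rw [hAe] at hne
    exact (h0 j (m j)).lt_of_ne' hne
  · calc ∑ j, c (m j) = ∑ j, c' (τ₀ (Sum.inl j)) := by
          refine Finset.sum_congr rfl fun j _ => ?_
          rw [hm j]; simp [hc']
      _ ≤ _ := hcost
/-- **Weighted rounding for Fair Max-Norm Makespan (core of the separation oracle).**
Given a feasible fractional solution `x` of the LP relaxation `LB(R,B,T)` and machine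
weights `α`, there exists an integral assignment `σ` using only pairs of size at most `R`,
whose `α`-weighted job counts do not exceed the `α`-weighted fractional job counts of `x`,
and whose `Top_ℓ^{(q)}` value on each machine is at most `(2R^q + B^q + ℓ·T^q)^{1/q}`. -/
theorem fair_maxnorm_makespan_topq_rounding
    (M : ℕ) (hM : 1 ≤ M) (J : Type) [Fintype J]
    (p : Fin M → J → ℝ) (hp : ∀ i j, 0 ≤ p i j)
    (q : ℝ) (hq : 1 ≤ q) (ℓ : ℕ) (hℓ : 1 ≤ ℓ)
    (R B T : ℝ) (hR : 0 ≤ R) (hB : 0 ≤ B) (hT : 0 ≤ T)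
    (α : Fin M → ℝ) (hα : ∀ i, 0 ≤ α i)
    (x : Fin M → J → ℝ)
    (hx01 : ∀ i j, x i j ∈ Set.Icc (0 : ℝ) 1)
    (hx1 : ∀ j, ∑ i, x i j = 1)
    (hxR : ∀ i j, R < p i j → x i j = 0)
    (hxℓ : ∀ i, ∑ j ∈ Finset.univ.filter (fun j => T ≤ p i j), x i j ≤ (ℓ : ℝ))
    (hxB : ∀ i, ∑ j ∈ Finset.univ.filter (fun j => T ≤ p i j),
        x i j * p i j ^ q ≤ B ^ q) :
    ∃ σ : J → Fin M,
      (∀ j, p (σ j) j ≤ R) ∧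
      (∑ i, α i * ((Finset.univ.filter (fun j => σ j = i)).card : ℝ) ≤
        ∑ i, α i * ∑ j, x i j) ∧
      ∀ i : Fin M, ∀ T' : Finset J, (∀ j ∈ T', σ j = i) → T'.card ≤ ℓ →
        ∑ j ∈ T', p i j ^ q ≤ 2 * R ^ q + B ^ q + (ℓ : ℝ) * T ^ q := by
  classical
  have hx0 : ∀ i j, 0 ≤ x i j := fun i j => (hx01 i j).1
  have hq0 : (0:ℝ) ≤ q := by linarith
  obtain ⟨e⟩ : Nonempty (J ≃ Fin (Fintype.card J)) := ⟨Fintype.equivFin J⟩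
  set key : Fin M → J → ℝ ×ₗ ℕ := fun i j => toLex (-(p i j), ((e j : ℕ))) with hkey
  have keyinj : ∀ i, Function.Injective (key i) := by
    intro i j j' hjj'
    have h2 : ((e j : ℕ)) = ((e j' : ℕ)) := congrArg (fun z => (ofLex z).2) hjj'
    exact e.injective (Fin.val_injective h2)
  have hkey_fst : ∀ i j j', key i j' ≤ key i j → p i j ≤ p i j' := by
    intro i j j' hle
    rcases Prod.Lex.le_iff.1 hle with h | h
    · simp only [hkey, ofLex_toLex] at h; linarith
    · simp only [hkey, ofLex_toLex] at h; linarith [h.1]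
  set bigs : Fin M → Finset J := fun i => Finset.univ.filter (fun j => T ≤ p i j) with hbigs
  set C : Fin M → J → ℝ :=
    fun i j => ∑ j' ∈ (bigs i).filter (fun j' => key i j' < key i j), x i j' with hC
  set Stot : Fin M → ℝ := fun i => ∑ j' ∈ bigs i, x i j' with hStot
  have hC0 : ∀ i j, 0 ≤ C i j := fun i j => Finset.sum_nonneg fun j' _ => hx0 i j'
  have hStot0 : ∀ i, 0 ≤ Stot i := fun i => Finset.sum_nonneg fun j' _ => hx0 i j'
  have hCle : ∀ i j, j ∈ bigs i → C i j + x i j ≤ Stot i := by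
    intro i j hj
    have hnotmem : j ∉ (bigs i).filter (fun j' => key i j' < key i j) := by
      simp only [Finset.mem_filter]
      rintro ⟨-, h⟩; exact lt_irrefl _ h
    have hsub : insert j ((bigs i).filter (fun j' => key i j' < key i j)) ⊆ bigs i := by
      intro j' hj'
      rcases Finset.mem_insert.1 hj' with rfl | hj'
      · exact hj
      · exact (Finset.mem_filter.1 hj').1
    calc C i j + x i j = ∑ j' ∈ insert j ((bigs i).filter (fun j' => key i j' < key i j)), x i j' := by
          rw [Finset.sum_insert hnotmem]; ring
      _ ≤ Stot i := Finset.sum_le_sum_of_subset_of_nonneg hsub fun j' _ _ => hx0 i j'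
  have hStotℓ : ∀ i, Stot i ≤ (ℓ:ℝ) := fun i => hxℓ i
  have hCmono : ∀ i j j', j ∈ bigs i → key i j < key i j' → C i j + x i j ≤ C i j' := by
    intro i j j' hj hlt
    have hnotmem : j ∉ (bigs i).filter (fun j'' => key i j'' < key i j) := by
      simp only [Finset.mem_filter]
      rintro ⟨-, h⟩; exact lt_irrefl _ h
    have hsub : insert j ((bigs i).filter (fun j'' => key i j'' < key i j)) ⊆
        (bigs i).filter (fun j'' => key i j'' < key i j') := by
      intro j'' hj''
      rcases Finset.mem_insert.1 hj'' with rfl | hj''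
      · exact Finset.mem_filter.2 ⟨hj, hlt⟩
      · rcases Finset.mem_filter.1 hj'' with ⟨h1, h2⟩
        exact Finset.mem_filter.2 ⟨h1, h2.trans hlt⟩
    calc C i j + x i j
        = ∑ j'' ∈ insert j ((bigs i).filter (fun j'' => key i j'' < key i j)), x i j'' := by
          rw [Finset.sum_insert hnotmem]; ring
      _ ≤ C i j' := Finset.sum_le_sum_of_subset_of_nonneg hsub fun j'' _ _ => hx0 i j''
  -- the fractional job-to-slot assignment
  set F : J → (Fin M × (Fin ℓ ⊕ J)) → ℝ := fun j s =>
    Sum.elim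
      (fun t : Fin ℓ => if T ≤ p s.1 j then
          rclamp ((t:ℕ):ℝ) (((t:ℕ):ℝ)+1) (C s.1 j + x s.1 j)
            - rclamp ((t:ℕ):ℝ) (((t:ℕ):ℝ)+1) (C s.1 j) else 0)
      (fun j' : J => if j = j' ∧ p s.1 j < T then x s.1 j else 0)
      s.2 with hF
  have hFbig : ∀ j i (t : Fin ℓ), T ≤ p i j → F j (i, Sum.inl t) =
      rclamp ((t:ℕ):ℝ) (((t:ℕ):ℝ)+1) (C i j + x i j)
        - rclamp ((t:ℕ):ℝ) (((t:ℕ):ℝ)+1) (C i j) := by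
    intro j i t hb
    simp only [hF, Sum.elim_inl, if_pos hb]
  have hFbig' : ∀ j i (t : Fin ℓ), ¬ T ≤ p i j → F j (i, Sum.inl t) = 0 := by
    intro j i t hb
    simp only [hF, Sum.elim_inl, if_neg hb]
  have hFsmall : ∀ j i (j' : J), F j (i, Sum.inr j') =
      if j = j' ∧ p i j < T then x i j else 0 := by
    intro j i j'
    simp only [hF, Sum.elim_inr]
  have hF0 : ∀ j s, 0 ≤ F j s := by
    rintro j ⟨i, t | j'⟩
    · by_cases hb : T ≤ p i j
      · rw [hFbig j i t hb]
        have := rclamp_mono ((t:ℕ):ℝ) (((t:ℕ):ℝ)+1)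
          (le_add_of_nonneg_right (hx0 i j) : C i j ≤ C i j + x i j)
        linarith
      · rw [hFbig' j i t hb]
    · rw [hFsmall]
      split
      · exact hx0 i j
      · exact le_rfl
  -- row sums per machine
  have hbigrow : ∀ i j, T ≤ p i j → ∑ t : Fin ℓ, F j (i, Sum.inl t) = x i j := by
    intro i j hb
    have hmem : j ∈ bigs i := by rw [hbigs]; simp [hb]
    rw [Finset.sum_congr rfl (fun t _ => hFbig j i t hb)]
    rw [Fin.sum_univ_eq_sum_range (fun t => rclamp (t:ℝ) ((t:ℝ)+1) (C i j + x i j)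
      - rclamp (t:ℝ) ((t:ℝ)+1) (C i j)) ℓ]
    rw [sum_rclamp_range ℓ (C i j) (C i j + x i j) (hC0 i j)
      (le_add_of_nonneg_right (hx0 i j)) ((hCle i j hmem).trans (hStotℓ i))]
    ring
  have hrow_machine : ∀ j i, ∑ w : Fin ℓ ⊕ J, F j (i, w) = x i j := by
    intro j i
    rw [Fintype.sum_sum_type]
    by_cases hb : T ≤ p i j
    · have h2 : ∑ j' : J, F j (i, Sum.inr j') = 0 := by
        refine Finset.sum_eq_zero fun j' _ => ?_
        rw [hFsmall, if_neg]
        rintro ⟨-, hlt⟩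
        exact absurd hb (not_le.2 hlt)
      rw [hbigrow i j hb, h2, add_zero]
    · have h1 : ∑ t : Fin ℓ, F j (i, Sum.inl t) = 0 :=
        Finset.sum_eq_zero fun t _ => hFbig' j i t hb
      have h2 : ∑ j' : J, F j (i, Sum.inr j') = x i j := by
        rw [Finset.sum_congr rfl (fun j' _ => hFsmall j i j')]
        rw [Finset.sum_eq_single_of_mem j (Finset.mem_univ j) (fun j' _ hne => by
          rw [if_neg]; rintro ⟨rfl, -⟩; exact hne rfl)]
        rw [if_pos ⟨rfl, not_le.1 hb⟩]
      rw [h1, h2, zero_add]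
  have hrow : ∀ j, ∑ s : Fin M × (Fin ℓ ⊕ J), F j s = 1 := by
    intro j
    rw [Fintype.sum_prod_type]
    rw [Finset.sum_congr rfl (fun i _ => hrow_machine j i)]
    exact hx1 j
  -- column sums
  have hcolbig_eq : ∀ i (t : Fin ℓ), ∑ j ∈ bigs i, F j (i, Sum.inl t) =
      rclamp ((t:ℕ):ℝ) (((t:ℕ):ℝ)+1) (Stot i) - rclamp ((t:ℕ):ℝ) (((t:ℕ):ℝ)+1) 0 := by
    intro i t
    have htel := telescope_sum (key i) (keyinj i) (x i)
      (rclamp ((t:ℕ):ℝ) (((t:ℕ):ℝ)+1)) (bigs i) (bigs i) Finset.Subset.rfl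
      (fun _ _ j hj _ => hj)
    rw [Finset.sum_congr rfl (fun j hj => by
      have hb : T ≤ p i j := by
        rw [hbigs] at hj; exact (Finset.mem_filter.1 hj).2
      rw [hFbig j i t hb])]
    exact htel
  have hcol : ∀ s : Fin M × (Fin ℓ ⊕ J), ∑ j, F j s ≤ 1 := by
    rintro ⟨i, t | j'⟩
    · have hsub : bigs i ⊆ Finset.univ := Finset.subset_univ _
      have hvan : ∀ j ∈ Finset.univ, j ∉ bigs i → F j (i, Sum.inl t) = 0 := by
        intro j _ hj
        refine hFbig' j i t fun hb => hj ?_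
        rw [hbigs]; simp [hb]
      rw [← Finset.sum_subset hsub hvan, hcolbig_eq i t]
      have h1 : rclamp ((t:ℕ):ℝ) (((t:ℕ):ℝ)+1) (Stot i) ≤ ((t:ℕ):ℝ)+1 := rclamp_le _ _ _
      have h2 : ((t:ℕ):ℝ) ≤ rclamp ((t:ℕ):ℝ) (((t:ℕ):ℝ)+1) 0 := le_rclamp _ _ _ (by linarith)
      linarith
    · rw [Finset.sum_congr rfl (fun j _ => hFsmall j i j')]
      rw [Finset.sum_eq_single_of_mem j' (Finset.mem_univ j')
        (fun j _ hne => by rw [if_neg]; rintro ⟨rfl, -⟩; exact hne rfl)]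
      split
      · exact (hx01 i j').2
      · exact zero_le_one
  -- support facts
  have hsupx : ∀ j i w, 0 < F j (i, w) → 0 < x i j := by
    rintro j i (t | j') hpos
    · by_cases hb : T ≤ p i j
      · rw [hFbig j i t hb] at hpos
        rcases (hx0 i j).lt_or_eq with h | h
        · exact h
        · rw [← h, add_zero] at hpos; linarith
      · rw [hFbig' j i t hb] at hpos; linarith
    · rw [hFsmall] at hpos
      split at hpos
      · exact hpos
      · linarith
  have hsupR : ∀ j i, 0 < x i j → p i j ≤ R := by
    intro j i hpos
    by_contra hc
    rw [hxR i j (not_le.1 hc)] at hpos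
    exact lt_irrefl _ hpos
  have hCxgt : ∀ j i (t : Fin ℓ), 0 < F j (i, Sum.inl t) → ((t:ℕ):ℝ) < C i j + x i j := by
    intro j i t hpos
    by_cases hb : T ≤ p i j
    · rw [hFbig j i t hb] at hpos
      exact lt_of_rclamp_lt' (by linarith :
        rclamp ((t:ℕ):ℝ) (((t:ℕ):ℝ)+1) (C i j) < rclamp ((t:ℕ):ℝ) (((t:ℕ):ℝ)+1) (C i j + x i j))
    · rw [hFbig' j i t hb] at hpos; linarith
  have hClt : ∀ j i (t : Fin ℓ), 0 < F j (i, Sum.inl t) → C i j < ((t:ℕ):ℝ)+1 := by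
    intro j i t hpos
    by_cases hb : T ≤ p i j
    · rw [hFbig j i t hb] at hpos
      have h1 : rclamp ((t:ℕ):ℝ) (((t:ℕ):ℝ)+1) (C i j) < ((t:ℕ):ℝ)+1 := by
        have := rclamp_le ((t:ℕ):ℝ) (((t:ℕ):ℝ)+1) (C i j + x i j)
        linarith
      exact lt_of_rclamp_lt h1
    · rw [hFbig' j i t hb] at hpos; linarith
  have hFbigT : ∀ j i (t : Fin ℓ), 0 < F j (i, Sum.inl t) → T ≤ p i j := by
    intro j i t hpos
    by_contra hb
    rw [hFbig' j i t hb] at hpos; linarith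
  -- domination
  have hdom : ∀ i (j : J) (t t' : Fin ℓ), (t':ℕ) + 1 = (t:ℕ) → 0 < F j (i, Sum.inl t) →
      p i j ^ q ≤ ∑ j' ∈ bigs i, F j' (i, Sum.inl t') * p i j' ^ q := by
    intro i j t t' htt' hpos
    have hbigj : T ≤ p i j := hFbigT j i t hpos
    have hmemj : j ∈ bigs i := by rw [hbigs]; simp [hbigj]
    have hcast : ((t':ℕ):ℝ) + 1 = ((t:ℕ):ℝ) := by exact_mod_cast congrArg (Nat.cast (R := ℝ)) htt'
    have h1 : ((t:ℕ):ℝ) < C i j + x i j := hCxgt j i t hpos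
    have hfull : ∑ j' ∈ bigs i, F j' (i, Sum.inl t') = 1 := by
      rw [hcolbig_eq i t']
      have hge : ((t':ℕ):ℝ) + 1 ≤ Stot i := by
        have := hCle i j hmemj
        linarith
      rw [rclamp_of_ge hge (by linarith), rclamp_of_le (by positivity) (by linarith)]
      linarith
    calc p i j ^ q = (∑ j' ∈ bigs i, F j' (i, Sum.inl t')) * p i j ^ q := by
          rw [hfull, one_mul]
      _ = ∑ j' ∈ bigs i, F j' (i, Sum.inl t') * p i j ^ q := Finset.sum_mul _ _ _
      _ ≤ ∑ j' ∈ bigs i, F j' (i, Sum.inl t') * p i j' ^ q := by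
          refine Finset.sum_le_sum fun j' hj' => ?_
          rcases (hF0 j' (i, Sum.inl t')).lt_or_eq with hpos' | hzero
          · have hC' : C i j' < ((t':ℕ):ℝ) + 1 := hClt j' i t' hpos'
            have hkle : ¬ key i j < key i j' := by
              intro hlt
              have h3 := hCmono i j j' hmemj hlt
              rw [hcast] at hC'
              linarith
            have hple : p i j ≤ p i j' := hkey_fst i j j' (le_of_not_gt hkle)
            exact mul_le_mul_of_nonneg_left
              (Real.rpow_le_rpow (hp i j) hple hq0) (hF0 j' (i, Sum.inl t'))
          · rw [← hzero, zero_mul, zero_mul]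
  -- the integral matching
  obtain ⟨m, hminj, hmpos, hmcost⟩ := exists_injective_matching F (fun s => α s.1)
    hF0 hrow hcol
  refine ⟨fun j => (m j).1, ?_, ?_, ?_⟩
  · intro j
    exact hsupR j (m j).1 (hsupx j (m j).1 (m j).2 (hmpos j))
  · have hswap : ∑ i, α i * ((Finset.univ.filter (fun j => (m j).1 = i)).card : ℝ)
        = ∑ j, α (m j).1 := by
      calc ∑ i, α i * ((Finset.univ.filter (fun j => (m j).1 = i)).card : ℝ)
          = ∑ i, ∑ j, (if (m j).1 = i then α i else 0) := by
            refine Finset.sum_congr rfl fun i _ => ?_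
            rw [Finset.card_filter]
            push_cast
            rw [Finset.mul_sum]
            refine Finset.sum_congr rfl fun j _ => ?_
            split <;> simp
        _ = ∑ j, ∑ i, (if (m j).1 = i then α i else 0) := Finset.sum_comm
        _ = ∑ j, α (m j).1 := by
            refine Finset.sum_congr rfl fun j _ => ?_
            simp
    rw [hswap]
    calc ∑ j, α (m j).1 ≤ ∑ j, ∑ s : Fin M × (Fin ℓ ⊕ J), F j s * α s.1 := hmcost
      _ = ∑ j, ∑ i, α i * x i j := by
          refine Finset.sum_congr rfl fun j _ => ?_
          rw [Fintype.sum_prod_type]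
          refine Finset.sum_congr rfl fun i _ => ?_
          have hred : ∑ w : Fin ℓ ⊕ J, F j (i, w) * α (i, w).1
              = ∑ w : Fin ℓ ⊕ J, F j (i, w) * α i :=
            Finset.sum_congr rfl fun w _ => rfl
          rw [hred, ← Finset.sum_mul, hrow_machine j i]
          ring
      _ = ∑ i, α i * ∑ j, x i j := by
          rw [Finset.sum_comm]
          exact Finset.sum_congr rfl fun i _ => by rw [Finset.mul_sum]
  · intro i T' hT'σ hcard
    have hRq : 0 ≤ R ^ q := Real.rpow_nonneg hR q
    have hTq : 0 ≤ T ^ q := Real.rpow_nonneg hT q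
    have hBsplit := Finset.sum_filter_add_sum_filter_not T' (fun j => T ≤ p i j)
      (fun j => p i j ^ q)
    set Tb : Finset J := T'.filter (fun j => T ≤ p i j) with hTb
    -- small jobs
    have hsmall : ∑ j ∈ T'.filter (fun j => ¬ T ≤ p i j), p i j ^ q ≤ (ℓ:ℝ) * T ^ q := by
      have h1 : ∀ j ∈ T'.filter (fun j => ¬ T ≤ p i j), p i j ^ q ≤ T ^ q := by
        intro j hj
        exact Real.rpow_le_rpow (hp i j) (not_le.1 (Finset.mem_filter.1 hj).2).le hq0
      calc ∑ j ∈ T'.filter (fun j => ¬ T ≤ p i j), p i j ^ q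
          ≤ ∑ _j ∈ T'.filter (fun j => ¬ T ≤ p i j), T ^ q := Finset.sum_le_sum h1
        _ = ((T'.filter (fun j => ¬ T ≤ p i j)).card : ℝ) * T ^ q := by
            rw [Finset.sum_const, nsmul_eq_mul]
        _ ≤ (ℓ:ℝ) * T ^ q := by
            have hc : (T'.filter (fun j => ¬ T ≤ p i j)).card ≤ ℓ :=
              le_trans (Finset.card_le_card (Finset.filter_subset _ _)) hcard
            exact mul_le_mul_of_nonneg_right (by exact_mod_cast hc) hTq
    -- big jobs
    have hslot : ∀ j ∈ Tb, ∃ t : Fin ℓ, m j = (i, Sum.inl t) := by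
      intro j hj
      have hj' : j ∈ T' := (Finset.mem_filter.1 hj).1
      have hbigj : T ≤ p i j := (Finset.mem_filter.1 hj).2
      have h1 : (m j).1 = i := hT'σ j hj'
      rcases h2 : (m j).2 with t | j'
      · exact ⟨t, by rw [← h1, ← h2]⟩
      · exfalso
        have hmj : m j = (i, Sum.inr j') := by rw [← h1, ← h2]
        have := hmpos j
        rw [hmj, hFsmall] at this
        rw [if_neg (by rintro ⟨-, hlt⟩; exact absurd hbigj (not_le.2 hlt))] at this
        exact lt_irrefl _ this
    set tf : J → Fin ℓ := fun j => Sum.elim id (fun _ => (⟨0, hℓ⟩ : Fin ℓ)) (m j).2 with htf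
    have hm2 : ∀ j ∈ Tb, m j = (i, Sum.inl (tf j)) := by
      intro j hj
      obtain ⟨t, ht⟩ := hslot j hj
      have h2 : (m j).2 = Sum.inl t := by rw [ht]
      rw [htf]
      simp only [h2, Sum.elim_inl, id]
      exact ht
    have hFt : ∀ j ∈ Tb, 0 < F j (i, Sum.inl (tf j)) := by
      intro j hj
      have := hmpos j
      rw [hm2 j hj] at this
      exact this
    have hinjT : ∀ j ∈ Tb, ∀ j'' ∈ Tb, tf j = tf j'' → j = j'' := by
      intro j hj j'' hj'' heq
      apply hminj
      rw [hm2 j hj, hm2 j'' hj'', heq]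
    have hTbsplit := Finset.sum_filter_add_sum_filter_not Tb (fun j => (tf j : ℕ) = 0)
      (fun j => p i j ^ q)
    -- the zero-slot job
    have hzeroslot : ∑ j ∈ Tb.filter (fun j => (tf j : ℕ) = 0), p i j ^ q ≤ R ^ q := by
      have hcard1 : (Tb.filter (fun j => (tf j : ℕ) = 0)).card ≤ 1 := by
        rw [Finset.card_le_one]
        intro a ha b hb
        have ha' := Finset.mem_filter.1 ha
        have hb' := Finset.mem_filter.1 hb
        refine hinjT a ha'.1 b hb'.1 (Fin.ext ?_)
        rw [ha'.2, hb'.2]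
      have hle : ∀ j ∈ Tb.filter (fun j => (tf j : ℕ) = 0), p i j ^ q ≤ R ^ q := by
        intro j hj
        have hj1 := (Finset.mem_filter.1 hj).1
        have hpx : 0 < x i j := by
          have := hFt j hj1
          exact hsupx j i (Sum.inl (tf j)) this
        exact Real.rpow_le_rpow (hp i j) (hsupR j i hpx) hq0
      calc ∑ j ∈ Tb.filter (fun j => (tf j : ℕ) = 0), p i j ^ q
          ≤ ∑ _j ∈ Tb.filter (fun j => (tf j : ℕ) = 0), R ^ q := Finset.sum_le_sum hle
        _ = ((Tb.filter (fun j => (tf j : ℕ) = 0)).card : ℝ) * R ^ q := by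
            rw [Finset.sum_const, nsmul_eq_mul]
        _ ≤ 1 * R ^ q := by
            exact mul_le_mul_of_nonneg_right (by exact_mod_cast hcard1) hRq
        _ = R ^ q := one_mul _
    -- the positive-slot jobs
    set G : Fin ℓ → ℝ := fun t => ∑ j' ∈ bigs i, F j' (i, Sum.inl t) * p i j' ^ q with hG
    have hG0 : ∀ t, 0 ≤ G t := by
      intro t
      exact Finset.sum_nonneg fun j' _ =>
        mul_nonneg (hF0 j' (i, Sum.inl t)) (Real.rpow_nonneg (hp i j') q)
    set pt : J → Fin ℓ := fun j => ⟨(tf j : ℕ) - 1, lt_of_le_of_lt (Nat.sub_le _ _) (tf j).2⟩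
      with hpt
    have hposslot : ∑ j ∈ Tb.filter (fun j => ¬ (tf j : ℕ) = 0), p i j ^ q ≤ B ^ q := by
      have hstep : ∀ j ∈ Tb.filter (fun j => ¬ (tf j : ℕ) = 0), p i j ^ q ≤ G (pt j) := by
        intro j hj
        have hj1 := (Finset.mem_filter.1 hj).1
        have hj2 := (Finset.mem_filter.1 hj).2
        refine hdom i j (tf j) (pt j) ?_ (hFt j hj1)
        simp only [hpt]
        exact Nat.succ_pred_eq_of_ne_zero hj2
      have hinj2 : ∀ j ∈ Tb.filter (fun j => ¬ (tf j : ℕ) = 0), ∀ j'' ∈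
          Tb.filter (fun j => ¬ (tf j : ℕ) = 0), pt j = pt j'' → j = j'' := by
        intro j hj j'' hj''  heq
        have hj1 := (Finset.mem_filter.1 hj).1
        have hj2 := (Finset.mem_filter.1 hj).2
        have hj1' := (Finset.mem_filter.1 hj'').1
        have hj2' := (Finset.mem_filter.1 hj'').2
        have hval : (tf j : ℕ) - 1 = (tf j'' : ℕ) - 1 := congrArg Fin.val heq
        have : (tf j : ℕ) = (tf j'' : ℕ) := by omega
        exact hinjT j hj1 j'' hj1' (Fin.ext this)
      calc ∑ j ∈ Tb.filter (fun j => ¬ (tf j : ℕ) = 0), p i j ^ q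
          ≤ ∑ j ∈ Tb.filter (fun j => ¬ (tf j : ℕ) = 0), G (pt j) := Finset.sum_le_sum hstep
        _ = ∑ t ∈ (Tb.filter (fun j => ¬ (tf j : ℕ) = 0)).image pt, G t :=
            (Finset.sum_image hinj2).symm
        _ ≤ ∑ t : Fin ℓ, G t := Finset.sum_le_sum_of_subset_of_nonneg
            (Finset.subset_univ _) (fun t _ _ => hG0 t)
        _ = ∑ j' ∈ bigs i, (∑ t : Fin ℓ, F j' (i, Sum.inl t)) * p i j' ^ q := by
            simp only [hG]
            rw [Finset.sum_comm]
            exact Finset.sum_congr rfl fun j' _ => (Finset.sum_mul _ _ _).symm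
        _ = ∑ j' ∈ bigs i, x i j' * p i j' ^ q := by
            refine Finset.sum_congr rfl fun j' hj' => ?_
            have hb : T ≤ p i j' := by
              rw [hbigs] at hj'; exact (Finset.mem_filter.1 hj').2
            rw [hbigrow i j' hb]
        _ ≤ B ^ q := hxB i
    -- combine
    rw [← hBsplit, ← hTbsplit]
    linarith
end

section
/- Let n ≥ 1 be an integer, POS = {min(2^t, n) : t ∈ ℕ} ⊆ {1,…,n}, and for ℓ ∈ POS let next(ℓ) = min{s ∈ POS : s > ℓ}, with next(n) := n+1. Let w : {1,…,n+1} → ℝ≥0 be non-increasing with w_{n+1} = 0. Let R ≥ 0 and let T*, T : POS → ℝ≥0 satisfy T(ℓ) ≤ R/n + 2·T*(ℓ) for every ℓ ∈ POS. Let V ≥ 0 satisfy V ≥ R·w_1 and V ≥ T*(ℓ)·Σ_{t=1}^{ℓ} w_t for every ℓ ∈ POS. Then Σ_{ℓ ∈ POS} (w_ℓ − w_{next(ℓ)})·ℓ·T(ℓ) ≤ (1 + 2·|POS|)·V; in particular, since |POS| ≤ ⌈log₂ n⌉ + 1, the left-hand side is at most (3 + 2⌈log₂ n⌉)·V. -/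
/-- The geometrically spaced index set `POS = {min(2^t, n) : t ∈ ℕ} ⊆ {1,…,n}`. -/
def sparsePos (n : ℕ) : Finset ℕ :=
  (Finset.range (n + 1)).image (fun t => min (2 ^ t) n)

/-- `next(ℓ) = min {s ∈ POS : s > ℓ}`, with the convention `next(n) = n + 1`. -/
noncomputable def sparseNext (n ℓ : ℕ) : ℕ :=
  if ℓ = n then n + 1 else sInf {s : ℕ | s ∈ sparsePos n ∧ ℓ < s}

lemma sparsePos_bounds {n ℓ : ℕ} (hn : 1 ≤ n) (h : ℓ ∈ sparsePos n) : 1 ≤ ℓ ∧ ℓ ≤ n := by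
  simp only [sparsePos, Finset.mem_image, Finset.mem_range] at h
  obtain ⟨t, -, rfl⟩ := h
  exact ⟨le_min Nat.one_le_two_pow hn, min_le_right _ _⟩

lemma one_mem_sparsePos {n : ℕ} (hn : 1 ≤ n) : 1 ∈ sparsePos n := by
  simp only [sparsePos, Finset.mem_image, Finset.mem_range]
  exact ⟨0, by omega, by simpa using hn⟩

lemma self_mem_sparsePos {n : ℕ} (hn : 1 ≤ n) : n ∈ sparsePos n := by
  simp only [sparsePos, Finset.mem_image, Finset.mem_range]
  exact ⟨n, by omega, min_eq_right (Nat.lt_two_pow_self (n := n)).le⟩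

lemma sparsePos_card_le {n : ℕ} (hn : 1 ≤ n) :
    (sparsePos n).card ≤ Nat.clog 2 n + 1 := by
  have h : sparsePos n ⊆ (Finset.range (Nat.clog 2 n + 1)).image (fun t => min (2 ^ t) n) := by
    intro ℓ hℓ
    simp only [sparsePos, Finset.mem_image, Finset.mem_range] at hℓ ⊢
    obtain ⟨t, ht, rfl⟩ := hℓ
    by_cases hc : t ≤ Nat.clog 2 n
    · exact ⟨t, by omega, rfl⟩
    · refine ⟨Nat.clog 2 n, by omega, ?_⟩
      have h1 : n ≤ 2 ^ Nat.clog 2 n := Nat.le_pow_clog (by norm_num) n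
      have h2 : n ≤ 2 ^ t := h1.trans (Nat.pow_le_pow_right (by norm_num) (by omega))
      rw [min_eq_right h1, min_eq_right h2]
  calc (sparsePos n).card ≤ _ := Finset.card_le_card h
    _ ≤ (Finset.range (Nat.clog 2 n + 1)).card := Finset.card_image_le
    _ = Nat.clog 2 n + 1 := by simp

/-- **The sparsified-threshold (load-gap) bound.**
If `w` is a non-increasing nonnegative weight vector with `w (n+1) = 0`, the guessed
thresholds satisfy `T(ℓ) ≤ R/n + 2T*(ℓ)`, and `V` dominates `R·w₁` and every
`T*(ℓ)·Σ_{t≤ℓ} w_t`, then `Σ_{ℓ ∈ POS} (w_ℓ − w_{next(ℓ)})·ℓ·T(ℓ) ≤ (1 + 2|POS|)·V`;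
in particular, since `|POS| ≤ ⌈log₂ n⌉ + 1`, it is at most `(3 + 2⌈log₂ n⌉)·V`. -/
theorem sparsified_threshold_bound
    (n : ℕ) (hn : 1 ≤ n)
    (w : ℕ → ℝ)
    (hw0 : ∀ t ∈ Finset.Icc 1 (n + 1), 0 ≤ w t)
    (hwmono : ∀ s ∈ Finset.Icc 1 (n + 1), ∀ t ∈ Finset.Icc 1 (n + 1), s ≤ t → w t ≤ w s)
    (hwlast : w (n + 1) = 0)
    (R : ℝ) (hR : 0 ≤ R)
    (Tstar T : ℕ → ℝ)
    (hTstar0 : ∀ ℓ ∈ sparsePos n, 0 ≤ Tstar ℓ)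
    (hT0 : ∀ ℓ ∈ sparsePos n, 0 ≤ T ℓ)
    (hTle : ∀ ℓ ∈ sparsePos n, T ℓ ≤ R / n + 2 * Tstar ℓ)
    (V : ℝ) (hV0 : 0 ≤ V)
    (hVR : R * w 1 ≤ V)
    (hVT : ∀ ℓ ∈ sparsePos n, Tstar ℓ * ∑ t ∈ Finset.Icc 1 ℓ, w t ≤ V) :
    (∑ ℓ ∈ sparsePos n, (w ℓ - w (sparseNext n ℓ)) * ℓ * T ℓ ≤
        (1 + 2 * ((sparsePos n).card : ℝ)) * V) ∧
    (∑ ℓ ∈ sparsePos n, (w ℓ - w (sparseNext n ℓ)) * ℓ * T ℓ ≤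
        (3 + 2 * (Nat.clog 2 n : ℝ)) * V) := by
  have hmem : ∀ ℓ ∈ sparsePos n, 1 ≤ ℓ ∧ ℓ ≤ n := fun ℓ h => sparsePos_bounds hn h
  have h1P : 1 ∈ sparsePos n := one_mem_sparsePos hn
  have hnP : n ∈ sparsePos n := self_mem_sparsePos hn
  -- next for non-maximal elements
  have hnext_ne : ∀ ℓ ∈ sparsePos n, ℓ ≠ n →
      sparseNext n ℓ ∈ sparsePos n ∧ ℓ < sparseNext n ℓ := by
    intro ℓ hℓ hne
    have hne' : {s : ℕ | s ∈ sparsePos n ∧ ℓ < s}.Nonempty :=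
      ⟨n, hnP, lt_of_le_of_ne (hmem ℓ hℓ).2 hne⟩
    have hm := Nat.sInf_mem hne'
    simp only [sparseNext, if_neg hne]
    exact ⟨hm.1, hm.2⟩
  have hnext_n : sparseNext n n = n + 1 := if_pos rfl
  have hnext_gt : ∀ ℓ ∈ sparsePos n, ℓ < sparseNext n ℓ := by
    intro ℓ hℓ
    by_cases h : ℓ = n
    · subst h; rw [hnext_n]; omega
    · exact (hnext_ne ℓ hℓ h).2
  have hnext_le : ∀ ℓ ∈ sparsePos n, sparseNext n ℓ ≤ n + 1 := by
    intro ℓ hℓ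
    by_cases h : ℓ = n
    · subst h; rw [hnext_n]
    · exact ((hmem _ (hnext_ne ℓ hℓ h).1).2).trans (by omega)
  -- strict monotonicity / injectivity of next on POS
  have hsm : ∀ a ∈ sparsePos n, ∀ b ∈ sparsePos n, a < b →
      sparseNext n a < sparseNext n b := by
    intro a ha b hb hab
    have han : a ≠ n := by have := (hmem b hb).2; omega
    have h1 : sparseNext n a ≤ b := by
      simp only [sparseNext, if_neg han]
      exact Nat.sInf_le ⟨hb, hab⟩
    exact lt_of_le_of_lt h1 (hnext_gt b hb)
  have hinjOn : ∀ a ∈ sparsePos n, ∀ b ∈ sparsePos n,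
      sparseNext n a = sparseNext n b → a = b := by
    intro a ha b hb hab
    rcases lt_trichotomy a b with h | h | h
    · exact absurd hab (hsm a ha b hb h).ne
    · exact h
    · exact absurd hab.symm (hsm b hb a ha h).ne
  -- image of next
  have himg : (sparsePos n).image (sparseNext n) = insert (n + 1) ((sparsePos n).erase 1) := by
    ext s
    constructor
    · intro hs
      rw [Finset.mem_image] at hs
      obtain ⟨ℓ, hℓ, rfl⟩ := hs
      by_cases h : ℓ = n
      · subst h; rw [hnext_n]; exact Finset.mem_insert_self _ _
      · obtain ⟨hmem', hlt⟩ := hnext_ne ℓ hℓ h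
        refine Finset.mem_insert_of_mem (Finset.mem_erase.mpr ⟨?_, hmem'⟩)
        have := (hmem ℓ hℓ).1; omega
    · intro hs
      rcases Finset.mem_insert.mp hs with h | h
      · subst h; exact Finset.mem_image.mpr ⟨n, hnP, hnext_n⟩
      · obtain ⟨hs1, hsP⟩ := Finset.mem_erase.mp h
        have hQne : ((sparsePos n).filter (fun p => p < s)).Nonempty :=
          ⟨1, Finset.mem_filter.mpr ⟨h1P, by have := (hmem s hsP).1; omega⟩⟩
        set ℓ := ((sparsePos n).filter (fun p => p < s)).max' hQne with hℓdef
        have hℓQ : ℓ ∈ (sparsePos n).filter (fun p => p < s) := Finset.max'_mem _ hQne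
        obtain ⟨hℓP, hℓs⟩ := Finset.mem_filter.mp hℓQ
        have hℓn : ℓ ≠ n := by have := (hmem s hsP).2; omega
        refine Finset.mem_image.mpr ⟨ℓ, hℓP, ?_⟩
        simp only [sparseNext, if_neg hℓn]
        have hne' : {t : ℕ | t ∈ sparsePos n ∧ ℓ < t}.Nonempty := ⟨s, hsP, hℓs⟩
        have hm2 := Nat.sInf_mem hne'
        have hle : sInf {t : ℕ | t ∈ sparsePos n ∧ ℓ < t} ≤ s := Nat.sInf_le ⟨hsP, hℓs⟩
        by_contra hcon
        have hlt2 : sInf {t : ℕ | t ∈ sparsePos n ∧ ℓ < t} < s := lt_of_le_of_ne hle hcon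
        have hfilt : sInf {t : ℕ | t ∈ sparsePos n ∧ ℓ < t} ∈
            (sparsePos n).filter (fun p => p < s) := Finset.mem_filter.mpr ⟨hm2.1, hlt2⟩
        have := Finset.le_max' _ _ hfilt
        have := hm2.2
        omega
  -- telescoping sum
  have hn1notin : (n + 1) ∉ (sparsePos n).erase 1 := by
    intro h
    have := (hmem _ (Finset.mem_of_mem_erase h)).2; omega
  have hsum_image : ∑ ℓ ∈ sparsePos n, w (sparseNext n ℓ)
      = ∑ s ∈ (sparsePos n).erase 1, w s := by
    rw [← Finset.sum_image hinjOn, himg, Finset.sum_insert hn1notin, hwlast, zero_add]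
  have htel : ∑ ℓ ∈ sparsePos n, (w ℓ - w (sparseNext n ℓ)) = w 1 := by
    rw [Finset.sum_sub_distrib, hsum_image, ← Finset.add_sum_erase _ w h1P]
    ring
  -- nonnegativity of gaps
  have hIccmem : ∀ ℓ ∈ sparsePos n, ℓ ∈ Finset.Icc 1 (n + 1) := by
    intro ℓ hℓ
    have := hmem ℓ hℓ
    exact Finset.mem_Icc.mpr ⟨this.1, by omega⟩
  have hIccnext : ∀ ℓ ∈ sparsePos n, sparseNext n ℓ ∈ Finset.Icc 1 (n + 1) := by
    intro ℓ hℓ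
    have h1 := hnext_gt ℓ hℓ
    have h2 := hnext_le ℓ hℓ
    have := (hmem ℓ hℓ).1
    exact Finset.mem_Icc.mpr ⟨by omega, h2⟩
  have hgap0 : ∀ ℓ ∈ sparsePos n, 0 ≤ w ℓ - w (sparseNext n ℓ) := by
    intro ℓ hℓ
    have := hwmono ℓ (hIccmem ℓ hℓ) (sparseNext n ℓ) (hIccnext ℓ hℓ) (hnext_gt ℓ hℓ).le
    linarith
  -- per-term bound
  have hterm : ∀ ℓ ∈ sparsePos n,
      (w ℓ - w (sparseNext n ℓ)) * ℓ * T ℓ ≤ (w ℓ - w (sparseNext n ℓ)) * R + 2 * V := by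
    intro ℓ hℓ
    have hg0 := hgap0 ℓ hℓ
    have hℓ1 := (hmem ℓ hℓ).1
    have hℓn := (hmem ℓ hℓ).2
    have hℓpos : (0 : ℝ) < (ℓ : ℝ) := by exact_mod_cast hℓ1
    have hnpos : (0 : ℝ) < (n : ℝ) := by exact_mod_cast hn
    have step1 : (w ℓ - w (sparseNext n ℓ)) * ℓ * T ℓ ≤
        (w ℓ - w (sparseNext n ℓ)) * ℓ * (R / n + 2 * Tstar ℓ) := by
      apply mul_le_mul_of_nonneg_left (hTle ℓ hℓ)
      positivity
    have stepA : (w ℓ - w (sparseNext n ℓ)) * ℓ * (R / n) ≤ (w ℓ - w (sparseNext n ℓ)) * R := by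
      have hln : (ℓ : ℝ) ≤ (n : ℝ) := by exact_mod_cast hℓn
      have : (ℓ : ℝ) * (R / n) ≤ (n : ℝ) * (R / n) :=
        mul_le_mul_of_nonneg_right hln (by positivity)
      have heq : (n : ℝ) * (R / n) = R := by field_simp
      calc (w ℓ - w (sparseNext n ℓ)) * ℓ * (R / n)
          = (w ℓ - w (sparseNext n ℓ)) * ((ℓ : ℝ) * (R / n)) := by ring
        _ ≤ (w ℓ - w (sparseNext n ℓ)) * R := by
            apply mul_le_mul_of_nonneg_left _ hg0
            exact this.trans heq.le
    have stepB : (w ℓ - w (sparseNext n ℓ)) * ℓ * (2 * Tstar ℓ) ≤ 2 * V := by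
      have hwnext0 : 0 ≤ w (sparseNext n ℓ) := hw0 _ (hIccnext ℓ hℓ)
      have h1 : (w ℓ - w (sparseNext n ℓ)) * ℓ * (2 * Tstar ℓ) ≤ w ℓ * ℓ * (2 * Tstar ℓ) := by
        apply mul_le_mul_of_nonneg_right _ (by have := hTstar0 ℓ hℓ; positivity)
        apply mul_le_mul_of_nonneg_right _ hℓpos.le
        linarith
      have hsumge : (ℓ : ℝ) * w ℓ ≤ ∑ t ∈ Finset.Icc 1 ℓ, w t := by
        have : ∀ t ∈ Finset.Icc 1 ℓ, w ℓ ≤ w t := by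
          intro t ht
          rw [Finset.mem_Icc] at ht
          exact hwmono t (Finset.mem_Icc.mpr ⟨ht.1, by omega⟩) ℓ (hIccmem ℓ hℓ) ht.2
        calc (ℓ : ℝ) * w ℓ = ∑ _t ∈ Finset.Icc 1 ℓ, w ℓ := by
              rw [Finset.sum_const, Nat.card_Icc]; simp [nsmul_eq_mul]
          _ ≤ ∑ t ∈ Finset.Icc 1 ℓ, w t := Finset.sum_le_sum this
      have h2 : w ℓ * ℓ * (2 * Tstar ℓ) ≤ 2 * (Tstar ℓ * ∑ t ∈ Finset.Icc 1 ℓ, w t) := by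
        have hT := hTstar0 ℓ hℓ
        have := mul_le_mul_of_nonneg_left hsumge hT
        nlinarith
      have h3 := hVT ℓ hℓ
      linarith
    calc (w ℓ - w (sparseNext n ℓ)) * ℓ * T ℓ
        ≤ (w ℓ - w (sparseNext n ℓ)) * ℓ * (R / n + 2 * Tstar ℓ) := step1
      _ = (w ℓ - w (sparseNext n ℓ)) * ℓ * (R / n)
          + (w ℓ - w (sparseNext n ℓ)) * ℓ * (2 * Tstar ℓ) := by ring
      _ ≤ (w ℓ - w (sparseNext n ℓ)) * R + 2 * V := add_le_add stepA stepB
  -- sum the per-term bounds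
  have hmain : ∑ ℓ ∈ sparsePos n, (w ℓ - w (sparseNext n ℓ)) * ℓ * T ℓ ≤
      (1 + 2 * ((sparsePos n).card : ℝ)) * V := by
    calc ∑ ℓ ∈ sparsePos n, (w ℓ - w (sparseNext n ℓ)) * ℓ * T ℓ
        ≤ ∑ ℓ ∈ sparsePos n, ((w ℓ - w (sparseNext n ℓ)) * R + 2 * V) :=
          Finset.sum_le_sum hterm
      _ = (∑ ℓ ∈ sparsePos n, (w ℓ - w (sparseNext n ℓ))) * R
          + ((sparsePos n).card : ℝ) * (2 * V) := by
          rw [Finset.sum_add_distrib, Finset.sum_const, ← Finset.sum_mul]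
          simp [nsmul_eq_mul]
      _ = R * w 1 + ((sparsePos n).card : ℝ) * (2 * V) := by rw [htel]; ring
      _ ≤ V + ((sparsePos n).card : ℝ) * (2 * V) := by linarith
      _ = (1 + 2 * ((sparsePos n).card : ℝ)) * V := by ring
  refine ⟨hmain, hmain.trans ?_⟩
  have hcard : ((sparsePos n).card : ℝ) ≤ (Nat.clog 2 n : ℝ) + 1 := by
    exact_mod_cast sparsePos_card_le hn
  nlinarith
end

section
/- For every integer t ≥ 0, defining w_ℓ := √ℓ − √(ℓ−1) for integers ℓ ≥ 1, one has w_1 + Σ_{l=1}^{t} w_{2^l}·(√(2^l) − √(2^{l−1})) ≥ (1 − 1/√2)·(t+1)/2. -/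
lemma key_term (x : ℝ) (hx : 1 ≤ x) :
    (1 - 1 / Real.sqrt 2) / 2 ≤
      (Real.sqrt x - Real.sqrt (x - 1)) * (Real.sqrt x - Real.sqrt x / Real.sqrt 2) := by
  have hx0 : (0:ℝ) ≤ x := by linarith
  have hs1 : (1:ℝ) ≤ Real.sqrt x := by
    rw [show (1:ℝ) = Real.sqrt 1 by simp]
    exact Real.sqrt_le_sqrt hx
  have hs0 : (0:ℝ) < Real.sqrt x := by linarith
  have hu0 : (0:ℝ) ≤ Real.sqrt (x - 1) := Real.sqrt_nonneg _
  have hus : Real.sqrt (x - 1) ≤ Real.sqrt x := Real.sqrt_le_sqrt (by linarith)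
  have hsq : Real.sqrt x * Real.sqrt x = x := Real.mul_self_sqrt hx0
  have husq : Real.sqrt (x-1) * Real.sqrt (x-1) = x - 1 := Real.mul_self_sqrt (by linarith)
  have hdiff : (Real.sqrt x - Real.sqrt (x - 1)) * (Real.sqrt x + Real.sqrt (x - 1)) = 1 := by
    linear_combination hsq - husq
  have hlow : 1 / (2 * Real.sqrt x) ≤ Real.sqrt x - Real.sqrt (x - 1) := by
    rw [div_le_iff₀ (by linarith)]
    nlinarith [hdiff]
  have h2 : (1:ℝ) ≤ Real.sqrt 2 := by
    rw [show (1:ℝ) = Real.sqrt 1 by simp]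
    exact Real.sqrt_le_sqrt (by norm_num)
  have hc : 0 ≤ 1 - 1 / Real.sqrt 2 := by
    have : 1 / Real.sqrt 2 ≤ 1 := by
      rw [div_le_one (by linarith)]; exact h2
    linarith
  have hfac : Real.sqrt x - Real.sqrt x / Real.sqrt 2 = Real.sqrt x * (1 - 1 / Real.sqrt 2) := by
    field_simp
  rw [hfac]
  calc (1 - 1 / Real.sqrt 2) / 2
      = (1 / (2 * Real.sqrt x)) * (Real.sqrt x * (1 - 1 / Real.sqrt 2)) := by
        field_simp
    _ ≤ (Real.sqrt x - Real.sqrt (x - 1)) * (Real.sqrt x * (1 - 1 / Real.sqrt 2)) := by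
        apply mul_le_mul_of_nonneg_right hlow
        positivity

/-- **Asymptotic tightness of the sparsified-threshold bound.**
With the ordered-norm weights `w_ℓ = √ℓ − √(ℓ−1)`, the telescoped sum
`w₁ + Σ_{l=1}^{t} w_{2^l}·(√(2^l) − √(2^{l−1}))` is at least `(1 − 1/√2)·(t+1)/2`,
hence `Ω(log r)` for `r = 2^t`. -/
theorem sparsified_threshold_tight (t : ℕ) :
    (1 - 1 / Real.sqrt 2) * (t + 1) / 2 ≤
      (Real.sqrt 1 - Real.sqrt ((1 : ℝ) - 1)) +
        ∑ l ∈ Finset.Icc 1 t,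
          (Real.sqrt ((2 : ℝ) ^ l) - Real.sqrt ((2 : ℝ) ^ l - 1)) *
            (Real.sqrt ((2 : ℝ) ^ l) - Real.sqrt ((2 : ℝ) ^ (l - 1))) := by
  have h2 : (1:ℝ) ≤ Real.sqrt 2 := by
    rw [show (1:ℝ) = Real.sqrt 1 by simp]
    exact Real.sqrt_le_sqrt (by norm_num)
  have hc : 0 ≤ 1 - 1 / Real.sqrt 2 := by
    have : 1 / Real.sqrt 2 ≤ 1 := by
      rw [div_le_one (by linarith)]; exact h2
    linarith
  have hsum : (t : ℝ) * ((1 - 1 / Real.sqrt 2) / 2) ≤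
      ∑ l ∈ Finset.Icc 1 t,
        (Real.sqrt ((2 : ℝ) ^ l) - Real.sqrt ((2 : ℝ) ^ l - 1)) *
          (Real.sqrt ((2 : ℝ) ^ l) - Real.sqrt ((2 : ℝ) ^ (l - 1))) := by
    have hcard : (Finset.Icc 1 t).card = t := by simp
    calc (t : ℝ) * ((1 - 1 / Real.sqrt 2) / 2)
        = ∑ _l ∈ Finset.Icc 1 t, (1 - 1 / Real.sqrt 2) / 2 := by
          rw [Finset.sum_const, hcard]; simp [mul_comm]
      _ ≤ _ := by
          apply Finset.sum_le_sum
          intro l hl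
          have hl1 : 1 ≤ l := (Finset.mem_Icc.mp hl).1
          have hx : (1:ℝ) ≤ (2:ℝ)^l := one_le_pow₀ (by norm_num)
          have h2pos : (0:ℝ) < Real.sqrt 2 := Real.sqrt_pos.mpr (by norm_num)
          have hsplit : (2:ℝ)^l = 2 * 2^(l-1) := by
            conv_lhs => rw [show l = (l-1)+1 from (Nat.succ_pred_eq_of_pos hl1).symm]
            rw [pow_succ']
          have hrw : Real.sqrt ((2 : ℝ) ^ (l - 1)) = Real.sqrt ((2:ℝ)^l) / Real.sqrt 2 := by
            rw [hsplit, Real.sqrt_mul (by norm_num)]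
            field_simp
          rw [hrw]
          exact key_term _ hx
  have h1 : Real.sqrt 1 - Real.sqrt ((1:ℝ) - 1) = 1 := by simp
  rw [h1]
  have : (1 - 1 / Real.sqrt 2) * (↑t + 1) / 2 = (t:ℝ) * ((1 - 1 / Real.sqrt 2)/2) + (1 - 1/Real.sqrt 2)/2 := by ring
  rw [this]
  have hpos : (0:ℝ) ≤ 1 / Real.sqrt 2 := by positivity
  have : (1 - 1/Real.sqrt 2)/2 ≤ 1 := by linarith
  linarith
end

section
/- Let q ≥ 1 be a real number, R ≥ 0, and ℓ ≥ 1 an integer. For t = 1,…,ℓ let J_t be nonempty finite pairwise disjoint sets, let v assign to each element of ⋃_t J_t a value in [0, R], and let x assign to each element a nonnegative weight with Σ_{j ∈ J_t} x_j = 1 for every t. Suppose that for every 1 ≤ t < ℓ and every j' ∈ J_{t+1}, one has v_{j'} ≥ v_j for all j ∈ J_t (the groups are sorted: every value in a group is at least every value in the previous group). Then Σ_{t=1}^{ℓ} (max_{j ∈ J_t} v_j)^q ≤ R^q + Σ_{t=1}^{ℓ} Σ_{j ∈ J_t} x_j·v_j^q. -/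
lemma biSup_finset_eq_sup' {ι : Type} (s : Finset ι) (H : s.Nonempty) (v : ι → ℝ)
    (hv : ∀ j ∈ s, 0 ≤ v j) :
    ⨆ j ∈ (s : Set ι), v j = s.sup' H v := by
  obtain ⟨j₀, hj₀⟩ := H
  have hsup0 : 0 ≤ s.sup' ⟨j₀, hj₀⟩ v := le_trans (hv j₀ hj₀) (Finset.le_sup' v hj₀)
  have hbdd : BddAbove (Set.range fun j => ⨆ _ : j ∈ (s : Set ι), v j) := by
    refine ⟨s.sup' ⟨j₀, hj₀⟩ v, ?_⟩
    rintro y ⟨j, rfl⟩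
    exact Real.iSup_le (fun hj => Finset.le_sup' v hj) hsup0
  apply le_antisymm
  · refine Real.iSup_le (fun j => Real.iSup_le (fun hj => Finset.le_sup' v hj) hsup0) hsup0
  · refine Finset.sup'_le _ _ fun j hj => ?_
    refine le_ciSup_of_le hbdd j ?_
    rw [ciSup_pos (show j ∈ (s : Set ι) from hj)]

/-- **The chaining inequality for bounding Top_ℓ^{(q)} norms of rounded solutions.**
If `J_1, …, J_ℓ` are nonempty pairwise disjoint finite groups, each carrying one unit of
fractional weight `x`, with values `v ∈ [0,R]`, sorted so that every value in a group is at
least every value in the previous one, then the sum of `q`-th powers of the group maxima is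
at most `R^q` plus the total weighted sum of `q`-th powers. -/
theorem chaining_topq_inequality
    {ι : Type} (q : ℝ) (hq : 1 ≤ q) (R : ℝ) (hR : 0 ≤ R)
    (ℓ : ℕ) (hℓ : 1 ≤ ℓ)
    (J : ℕ → Finset ι)
    (hne : ∀ t ∈ Finset.Icc 1 ℓ, (J t).Nonempty)
    (hdisj : ∀ s ∈ Finset.Icc 1 ℓ, ∀ t ∈ Finset.Icc 1 ℓ, s ≠ t → Disjoint (J s) (J t))
    (v : ι → ℝ)
    (hv : ∀ t ∈ Finset.Icc 1 ℓ, ∀ j ∈ J t, v j ∈ Set.Icc (0 : ℝ) R)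
    (x : ι → ℝ) (hx0 : ∀ j, 0 ≤ x j)
    (hx1 : ∀ t ∈ Finset.Icc 1 ℓ, ∑ j ∈ J t, x j = 1)
    (hsorted : ∀ t, 1 ≤ t → t < ℓ → ∀ j' ∈ J (t + 1), ∀ j ∈ J t, v j ≤ v j') :
    ∑ t ∈ Finset.Icc 1 ℓ, (⨆ j ∈ (J t : Set ι), v j) ^ q ≤
      R ^ q + ∑ t ∈ Finset.Icc 1 ℓ, ∑ j ∈ J t, x j * v j ^ q := by
  -- rewrite each biSup as a Finset.sup'
  have hq0 : (0:ℝ) ≤ q := le_trans zero_le_one hq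
  set M : ℕ → ℝ := fun t => ⨆ j ∈ (J t : Set ι), v j with hM
  have hMeq : ∀ t (ht : t ∈ Finset.Icc 1 ℓ), M t = (J t).sup' (hne t ht) v := by
    intro t ht
    exact biSup_finset_eq_sup' (J t) (hne t ht) v (fun j hj => (hv t ht j hj).1)
  have hM0 : ∀ t ∈ Finset.Icc 1 ℓ, 0 ≤ M t := by
    intro t ht
    rw [hMeq t ht]
    obtain ⟨j, hj⟩ := hne t ht
    exact le_trans (hv t ht j hj).1 (Finset.le_sup' v hj)
  have hMR : ∀ t ∈ Finset.Icc 1 ℓ, M t ≤ R := by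
    intro t ht
    rw [hMeq t ht]
    exact Finset.sup'_le _ _ fun j hj => (hv t ht j hj).2
  -- weighted sums are nonnegative
  have hS0 : ∀ t ∈ Finset.Icc 1 ℓ, 0 ≤ ∑ j ∈ J t, x j * v j ^ q := by
    intro t ht
    refine Finset.sum_nonneg fun j hj => mul_nonneg (hx0 j) (Real.rpow_nonneg (hv t ht j hj).1 q)
  -- key step: for 1 ≤ t < ℓ, M t ^ q ≤ weighted sum over J (t+1)
  have hkey : ∀ t, 1 ≤ t → t < ℓ → M t ^ q ≤ ∑ j ∈ J (t+1), x j * v j ^ q := by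
    intro t h1 h2
    have ht : t ∈ Finset.Icc 1 ℓ := Finset.mem_Icc.mpr ⟨h1, le_of_lt h2⟩
    have ht1 : t + 1 ∈ Finset.Icc 1 ℓ := Finset.mem_Icc.mpr ⟨by omega, by omega⟩
    have hle : ∀ j ∈ J (t+1), M t ^ q ≤ v j ^ q := by
      intro j hj
      refine Real.rpow_le_rpow (hM0 t ht) ?_ hq0
      rw [hMeq t ht]
      exact Finset.sup'_le _ _ fun j' hj' => hsorted t h1 h2 j hj j' hj'
    calc M t ^ q = ∑ j ∈ J (t+1), x j * M t ^ q := by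
          rw [← Finset.sum_mul, hx1 (t+1) ht1, one_mul]
      _ ≤ ∑ j ∈ J (t+1), x j * v j ^ q :=
          Finset.sum_le_sum fun j hj => mul_le_mul_of_nonneg_left (hle j hj) (hx0 j)
  -- last group: M ℓ ^ q ≤ R ^ q
  have hlast : M ℓ ^ q ≤ R ^ q := by
    have hℓm : ℓ ∈ Finset.Icc 1 ℓ := Finset.mem_Icc.mpr ⟨hℓ, le_refl ℓ⟩
    exact Real.rpow_le_rpow (hM0 ℓ hℓm) (hMR ℓ hℓm) hq0
  -- split off the last term
  have hsplit : Finset.Icc 1 ℓ = insert ℓ (Finset.Icc 1 (ℓ-1)) := by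
    ext t; simp [Finset.mem_Icc]; omega
  have hnotmem : ℓ ∉ Finset.Icc 1 (ℓ-1) := by simp [Finset.mem_Icc]; omega
  rw [hsplit, Finset.sum_insert hnotmem, Finset.sum_insert hnotmem]
  have hshift : ∑ t ∈ Finset.Icc 1 (ℓ-1), M t ^ q
      ≤ ∑ t ∈ Finset.Icc 1 (ℓ-1), ∑ j ∈ J (t+1), x j * v j ^ q := by
    refine Finset.sum_le_sum fun t ht => ?_
    obtain ⟨h1, h2⟩ := Finset.mem_Icc.mp ht
    exact hkey t h1 (by omega)
  have hreindex : ∑ t ∈ Finset.Icc 1 (ℓ-1), ∑ j ∈ J (t+1), x j * v j ^ q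
      = ∑ t ∈ Finset.Icc 2 ℓ, ∑ j ∈ J t, x j * v j ^ q := by
    have hIcc : Finset.Icc 2 ℓ = (Finset.Icc 1 (ℓ-1)).map (addRightEmbedding 1) := by
      rw [Finset.map_add_right_Icc]
      congr 1
      omega
    rw [hIcc, Finset.sum_map]
    rfl
  -- combine
  have h2 : ∑ t ∈ Finset.Icc 2 ℓ, ∑ j ∈ J t, x j * v j ^ q
      ≤ ∑ t ∈ Finset.Icc 1 ℓ, ∑ j ∈ J t, x j * v j ^ q := by
    refine Finset.sum_le_sum_of_subset_of_nonneg ?_ fun t ht _ => hS0 t ht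
    intro t ht; simp only [Finset.mem_Icc] at *; omega
  have h2' : ∑ t ∈ Finset.Icc 1 ℓ, ∑ j ∈ J t, x j * v j ^ q
      = ∑ j ∈ J ℓ, x j * v j ^ q + ∑ t ∈ Finset.Icc 1 (ℓ-1), ∑ j ∈ J t, x j * v j ^ q := by
    rw [hsplit, Finset.sum_insert hnotmem]
  rw [← h2']
  calc M ℓ ^ q + ∑ t ∈ Finset.Icc 1 (ℓ-1), M t ^ q
      ≤ R ^ q + ∑ t ∈ Finset.Icc 2 ℓ, ∑ j ∈ J t, x j * v j ^ q := by
        rw [← hreindex]; exact add_le_add hlast hshift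
    _ ≤ R ^ q + ∑ t ∈ Finset.Icc 1 ℓ, ∑ j ∈ J t, x j * v j ^ q := by
        exact add_le_add_right h2 _
end

section
/- Let J be a finite set, M ≥ 1 an integer, F a finite set of functions σ : J → {1,…,M}, and e ∈ ℝ^M. Then the set Q = {(α, μ) ∈ ℝ≥0^M × ℝ : Σ_{i=1}^{M} α_i·e_i ≤ μ − 1, and Σ_{i=1}^{M} α_i·|σ^{-1}(i)| ≥ μ for every σ ∈ F} is empty if and only if there exists λ : F → ℝ≥0 with Σ_{σ ∈ F} λ_σ = 1 and Σ_{σ ∈ F} λ_σ·|σ^{-1}(i)| ≤ e_i for every i ∈ {1,…,M}. -/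
open Pointwise


/-- **LP-duality / Farkas statement for Fair Max-Norm Makespan.**
The polytope `Q_l(B)` (on dual variables `(α, μ)`) is empty if and only if the primal
program `Pl_l(B)` is feasible, i.e. there is a distribution `λ` over the finite collection
`F` of assignments whose expected job count on each machine `i` is at most `e_i`. -/
theorem fair_makespan_farkas
    (J : Type) [Fintype J] (M : ℕ) (hM : 1 ≤ M)
    (F : Finset (J → Fin M)) (e : Fin M → ℝ) :
    (¬ ∃ (α : Fin M → ℝ) (μ : ℝ),
        (∀ i, 0 ≤ α i) ∧
        (∑ i, α i * e i ≤ μ - 1) ∧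
        (∀ σ ∈ F, μ ≤ ∑ i, α i * ((Finset.univ.filter (fun j => σ j = i)).card : ℝ))) ↔
    ∃ lam : (J → Fin M) → ℝ,
      (∀ σ, 0 ≤ lam σ) ∧
      (∑ σ ∈ F, lam σ = 1) ∧
      (∀ i, ∑ σ ∈ F, lam σ * ((Finset.univ.filter (fun j => σ j = i)).card : ℝ) ≤ e i) := by
  set c : (J → Fin M) → (Fin M → ℝ) :=
    fun σ i => ((Finset.univ.filter (fun j => σ j = i)).card : ℝ) with hc
  constructor
  · -- hard direction: Q empty → primal feasible
    intro hQ
    -- F is nonempty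
    have hF : F.Nonempty := by
      by_contra h
      rw [Finset.not_nonempty_iff_eq_empty] at h
      exact hQ ⟨fun _ => 0, 1, fun i => le_refl 0,
        by simp, by simp [h]⟩
    -- Step 1: for every nonnegative α there is σ ∈ F with ⟨α, c σ⟩ ≤ ⟨α, e⟩
    have step1 : ∀ α : Fin M → ℝ, (∀ i, 0 ≤ α i) →
        ∃ σ ∈ F, ∑ i, α i * c σ i ≤ ∑ i, α i * e i := by
      intro α hα
      by_contra h
      push_neg at h
      set δ := F.inf' hF (fun σ => ∑ i, α i * c σ i - ∑ i, α i * e i) with hδ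
      have hδpos : 0 < δ := by
        rw [hδ, Finset.lt_inf'_iff]
        intro σ hσ
        have := h σ hσ
        linarith
      have hδle : ∀ σ ∈ F, δ ≤ ∑ i, α i * c σ i - ∑ i, α i * e i :=
        fun σ hσ => Finset.inf'_le _ hσ
      refine hQ ⟨fun i => α i / δ, (∑ i, α i * e i) / δ + 1, ?_, ?_, ?_⟩
      · exact fun i => div_nonneg (hα i) hδpos.le
      · have : ∑ i, α i / δ * e i = (∑ i, α i * e i) / δ := by
          rw [Finset.sum_div]
          exact Finset.sum_congr rfl fun i _ => by ring
        rw [this]; ring_nf; exact le_refl _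
      · intro σ hσ
        have h1 : ∑ i, α i / δ * c σ i = (∑ i, α i * c σ i) / δ := by
          rw [Finset.sum_div]
          exact Finset.sum_congr rfl fun i _ => by ring
        rw [h1]
        have h2 := hδle σ hσ
        have h3 : (∑ i, α i * e i) / δ + 1 = (∑ i, α i * e i + δ) / δ := by
          field_simp
        rw [h3, div_le_div_iff_of_pos_right]
        · linarith
        · exact hδpos
    -- the linear map sending weights to the weighted average of the `c σ`
    set L : ((↥F) → ℝ) →ₗ[ℝ] (Fin M → ℝ) :=
      { toFun := fun w => ∑ σ : ↥F, w σ • c σ.1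
        map_add' := by
          intro x y
          simp [add_smul, Finset.sum_add_distrib]
        map_smul' := by
          intro r x
          simp [smul_smul, Finset.smul_sum] } with hL
    set P : Set (Fin M → ℝ) := {x | ∀ i, 0 ≤ x i} with hP
    have hPpi : P = Set.pi Set.univ (fun _ : Fin M => Set.Ici (0 : ℝ)) := by
      ext x; simp [hP, Set.mem_pi, Pi.le_def]
    have hPclosed : IsClosed P := by
      rw [hPpi]; exact isClosed_set_pi fun i _ => isClosed_Ici
    have hPconv : Convex ℝ P := by
      rw [hPpi]; exact convex_pi fun i _ => convex_Ici 0
    set T : Set (Fin M → ℝ) := L '' stdSimplex ℝ ↥F with hT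
    set S : Set (Fin M → ℝ) := T + P with hS
    have hSclosed : IsClosed S := by
      apply IsClosed.add_left_of_isCompact hPclosed
      exact (isCompact_stdSimplex ℝ _).image L.continuous_of_finiteDimensional
    have hSconv : Convex ℝ S := ((convex_stdSimplex ℝ _).linear_image L).add hPconv
    -- points `c σ` belong to `S`, and `S` absorbs the nonnegative orthant
    have hcS : ∀ σ (hσ : σ ∈ F), c σ ∈ S := by
      intro σ hσ
      have hw : (Pi.single (⟨σ, hσ⟩ : ↥F) (1 : ℝ)) ∈ stdSimplex ℝ ↥F :=
        single_mem_stdSimplex ℝ _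
      have hLw : L (Pi.single (⟨σ, hσ⟩ : ↥F) (1 : ℝ)) = c σ := by
        show ∑ σ' : ↥F, (Pi.single (⟨σ, hσ⟩ : ↥F) (1 : ℝ) : ↥F → ℝ) σ' • c σ'.1 = c σ
        rw [Finset.sum_eq_single (⟨σ, hσ⟩ : ↥F)]
        · simp
        · intro b _ hb; simp [Pi.single_apply, hb]
        · intro h; exact absurd (Finset.mem_univ _) h
      have : c σ = L (Pi.single (⟨σ, hσ⟩ : ↥F) (1 : ℝ)) + 0 := by rw [hLw, add_zero]
      rw [this, hS]
      exact Set.add_mem_add ⟨_, hw, rfl⟩ (fun i => le_refl 0)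
    have habs : ∀ x ∈ S, ∀ y ∈ P, x + y ∈ S := by
      intro x hx y hy
      rw [hS, Set.mem_add] at hx ⊢
      obtain ⟨t, ht, p, hp, rfl⟩ := hx
      exact ⟨t, ht, p + y, fun i => add_nonneg (hp i) (hy i), by abel⟩
    -- e ∈ S via separation
    have heS : e ∈ S := by
      by_contra he
      obtain ⟨f, u, hfe, hfS⟩ := geometric_hahn_banach_point_closed hSconv hSclosed he
      set α : Fin M → ℝ := fun i => f (Pi.single i 1) with hα
      have key : ∀ a : Fin M → ℝ, f a = ∑ i, α i * a i := by
        intro a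
        conv_lhs => rw [← Finset.univ_sum_single a]
        rw [map_sum]
        refine Finset.sum_congr rfl fun i _ => ?_
        have : (Pi.single i (a i) : Fin M → ℝ) = a i • (Pi.single i 1 : Fin M → ℝ) := by
          rw [← Pi.single_smul, smul_eq_mul, mul_one]
        rw [this, map_smul, smul_eq_mul, hα, mul_comm]
      -- α is nonnegative
      obtain ⟨σ₀, hσ₀⟩ := hF
      have hb₀ : c σ₀ ∈ S := hcS σ₀ hσ₀
      have hαnn : ∀ i, 0 ≤ α i := by
        intro i
        by_contra hneg
        push_neg at hneg
        set t := (u - f (c σ₀)) / α i with htdef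
        have hub : u < f (c σ₀) := hfS _ hb₀
        have ht : 0 ≤ t := le_of_lt (div_pos_of_neg_of_neg (by linarith) hneg)
        have hmem : c σ₀ + t • (Pi.single i 1 : Fin M → ℝ) ∈ S := by
          apply habs _ hb₀
          intro j
          simp only [Pi.smul_apply, Pi.single_apply, smul_eq_mul]
          rcases eq_or_ne j i with h | h <;> simp [h, ht]
        have := hfS _ hmem
        rw [map_add, map_smul, smul_eq_mul] at this
        have h2 : t * f (Pi.single i (1 : ℝ)) = u - f (c σ₀) := by
          rw [htdef]
          exact div_mul_cancel₀ _ (ne_of_lt hneg)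
        linarith
      obtain ⟨σ, hσF, hle⟩ := step1 α hαnn
      have h1 : f (c σ) = ∑ i, α i * c σ i := key _
      have h2 : f e = ∑ i, α i * e i := key _
      have := hfS _ (hcS σ hσF)
      rw [h1] at this
      rw [h2] at hfe
      linarith
    -- extract the primal solution
    rw [hS, Set.mem_add] at heS
    obtain ⟨x, ⟨w, hw, hLwx⟩, y, hy, hxy⟩ := heS
    refine ⟨fun σ => if h : σ ∈ F then w ⟨σ, h⟩ else 0, ?_, ?_, ?_⟩
    · intro σ
      by_cases h : σ ∈ F
      · simp only [dif_pos h]; exact hw.1 _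
      · simp [h]
    · rw [← Finset.sum_attach F (fun σ => if h : σ ∈ F then w ⟨σ, h⟩ else 0)]
      have : ∀ σ : ↥F, (if h : σ.1 ∈ F then w ⟨σ.1, h⟩ else 0) = w σ := by
        intro σ; rw [dif_pos σ.2]
      rw [Finset.sum_congr rfl fun σ _ => this σ, ← Finset.univ_eq_attach]
      exact hw.2
    · intro i
      have hLi : (L w) i = ∑ σ : ↥F, w σ * c σ.1 i := by
        simp [hL, Finset.sum_apply]
      have hsum : ∑ σ ∈ F, (if h : σ ∈ F then w ⟨σ, h⟩ else 0) * c σ i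
          = ∑ σ : ↥F, w σ * c σ.1 i := by
        rw [← Finset.sum_attach F (fun σ => (if h : σ ∈ F then w ⟨σ, h⟩ else 0) * c σ i),
          ← Finset.univ_eq_attach]
        exact Finset.sum_congr rfl fun σ _ => by rw [dif_pos σ.2]
      have hei : x i + y i = e i := by rw [← hxy]; rfl
      have hxi : x i = ∑ σ : ↥F, w σ * c σ.1 i := by rw [← hLwx]; exact hLi
      have := hy i
      calc ∑ σ ∈ F, (if h : σ ∈ F then w ⟨σ, h⟩ else 0) * c σ i
          = x i := by rw [hsum, hxi]
        _ ≤ e i := by linarith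
  · -- easy direction: primal feasible → Q empty
    rintro ⟨lam, h0, h1, h2⟩ ⟨α, μ, hα0, hαe, hαc⟩
    have key : μ ≤ μ - 1 := by
      calc μ = ∑ σ ∈ F, lam σ * μ := by rw [← Finset.sum_mul, h1, one_mul]
        _ ≤ ∑ σ ∈ F, lam σ * (∑ i, α i * c σ i) :=
            Finset.sum_le_sum fun σ hσ => mul_le_mul_of_nonneg_left (hαc σ hσ) (h0 σ)
        _ = ∑ i, α i * (∑ σ ∈ F, lam σ * c σ i) := by
            simp_rw [Finset.mul_sum]
            rw [Finset.sum_comm]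
            exact Finset.sum_congr rfl fun i _ => Finset.sum_congr rfl fun σ _ => by ring
        _ ≤ ∑ i, α i * e i :=
            Finset.sum_le_sum fun i _ => mul_le_mul_of_nonneg_left (h2 i) (hα0 i)
        _ ≤ μ - 1 := hαe
    linarith
end

section
/- Let E be a finite set, 𝓛 a laminar family of subsets of E, and M a matroid on ground set E with rank function r. Let 𝓛₁, 𝓛₂ ⊆ 𝓛 and let b₁ : 𝓛₁ → ℤ and b₂ : 𝓛₂ → ℤ. Define the polytope P = {x ∈ ℝ^E : x_e ≥ 0 for all e ∈ E; Σ_{e ∈ L} x_e ≤ b₁(L) for all L ∈ 𝓛₁; Σ_{e ∈ L} x_e ≥ b₂(L) for all L ∈ 𝓛₂; Σ_{e ∈ S} x_e ≤ r(S) for all S ⊆ E}. Then P is either empty or every extreme point of P is integral (all its coordinates are integers). -/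
open Finset

set_option linter.unusedSectionVars false
set_option maxHeartbeats 1000000

section Aux
variable {E : Type} [Fintype E] [DecidableEq E]

lemma sum_int_of_forall_int (x : E → ℝ) (s : Finset E) (h : ∀ e ∈ s, ∃ z : ℤ, x e = (z : ℝ)) :
    ∃ z : ℤ, ∑ e ∈ s, x e = (z : ℝ) := by
  classical
  induction s using Finset.induction_on with
  | empty => exact ⟨0, by simp⟩
  | insert a s hnotmem ih =>
      obtain ⟨z, hz⟩ := ih (fun e he => h e (mem_insert_of_mem he))
      obtain ⟨w, hw⟩ := h _ (mem_insert_self _ _)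
      exact ⟨w + z, by rw [Finset.sum_insert hnotmem, hz, hw]; push_cast; ring⟩

lemma abs_mul_le_of_le_div {η s m : ℝ} (hs : 0 ≤ s) (hη : |η| ≤ s / (|m| + 1)) :
    |η * m| ≤ s := by
  have hm : (0:ℝ) < |m| + 1 := by positivity
  rw [abs_mul]
  have h1 : |η| * |m| ≤ (s / (|m| + 1)) * |m| := mul_le_mul_of_nonneg_right hη (abs_nonneg m)
  have h2 : (s / (|m| + 1)) * |m| ≤ s := by
    rw [div_mul_eq_mul_div, div_le_iff₀ hm]
    nlinarith [abs_nonneg m]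
  linarith

lemma laminar_floor_coeffs :
    ∀ (n : ℕ) (𝓐 : Finset (Finset E)), 𝓐.card ≤ n →
    (∀ A ∈ 𝓐, ∀ B ∈ 𝓐, A ⊆ B ∨ B ⊆ A ∨ Disjoint A B) →
    ∀ (lam : Finset E → ℝ) (t : ℝ),
    ∃ lam' : Finset E → ℤ, ∀ e : E,
      (∑ A ∈ 𝓐.filter (fun A => e ∈ A), lam' A) =
        ⌊t + ∑ A ∈ 𝓐.filter (fun A => e ∈ A), lam A⌋ - ⌊t⌋ := by
  intro n
  induction n with
  | zero =>
      intro 𝓐 hcard _ lam t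
      have h0 : 𝓐 = ∅ := card_eq_zero.mp (Nat.le_zero.mp hcard)
      exact ⟨0, by simp [h0]⟩
  | succ n ih =>
      intro 𝓐 hcard hlam lam t
      rcases 𝓐.eq_empty_or_nonempty with rfl | hne
      · exact ⟨0, by simp⟩
      obtain ⟨A', hA'mem, hA'max⟩ : ∃ i ∈ 𝓐, ∀ x ∈ 𝓐, ¬ i < x := by
        obtain ⟨i, hi⟩ := 𝓐.exists_maximal hne
        exact ⟨i, hi.1, fun x hx hlt => lt_irrefl i (lt_of_lt_of_le hlt (hi.2 hx hlt.le))⟩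
      set I := (𝓐.erase A').filter (fun A => A ⊆ A') with hIdef
      set O := (𝓐.erase A').filter (fun A => ¬ A ⊆ A') with hOdef
      have hIsub : I ⊆ 𝓐 := (filter_subset _ _).trans (erase_subset _ _)
      have hOsub : O ⊆ 𝓐 := (filter_subset _ _).trans (erase_subset _ _)
      have herasecard : (𝓐.erase A').card ≤ n := by
        have := card_erase_of_mem hA'mem
        omega
      have hIcard : I.card ≤ n := le_trans (card_le_card (filter_subset _ _)) herasecard
      have hOcard : O.card ≤ n := le_trans (card_le_card (filter_subset _ _)) herasecard
      obtain ⟨lamI, hlamI⟩ := ih I hIcard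
        (fun A hA B hB => hlam A (hIsub hA) B (hIsub hB)) lam (t + lam A')
      obtain ⟨lamO, hlamO⟩ := ih O hOcard
        (fun A hA B hB => hlam A (hOsub hA) B (hOsub hB)) lam t
      have hOdisj : ∀ A ∈ O, Disjoint A A' := by
        intro A hA
        have hAmem : A ∈ 𝓐 := hOsub hA
        have hAne : A ≠ A' := ne_of_mem_erase (mem_of_mem_filter A hA)
        have hAnsub : ¬ A ⊆ A' := (mem_filter.mp hA).2
        rcases hlam A hAmem A' hA'mem with h | h | h
        · exact absurd h hAnsub
        · exact absurd (lt_of_le_of_ne h (Ne.symm hAne) : A' < A) (hA'max A hAmem)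
        · exact h
      refine ⟨fun A => if A = A' then ⌊t + lam A'⌋ - ⌊t⌋ else if A ⊆ A' then lamI A
        else lamO A, ?_⟩
      intro e
      have hsplit : ∀ (M : Type) (_ : AddCommMonoid M) (c : Finset E → M),
          ∑ A ∈ 𝓐.filter (fun A => e ∈ A), c A =
            (if e ∈ A' then c A' else 0) + ((∑ A ∈ I.filter (fun A => e ∈ A), c A)
              + ∑ A ∈ O.filter (fun A => e ∈ A), c A) := by
        intro M _ c
        have h1 : 𝓐 = insert A' (𝓐.erase A') := (insert_erase hA'mem).symm
        have h2 : 𝓐.erase A' = I ∪ O := (filter_union_filter_not_eq _ _).symm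
        rw [h1, filter_insert]
        have h3 : A' ∉ (𝓐.erase A').filter (fun A => e ∈ A) :=
          fun hc => (notMem_erase A' 𝓐) (mem_of_mem_filter _ hc)
        have hIO : Disjoint (I.filter (fun A => e ∈ A)) (O.filter (fun A => e ∈ A)) := by
          exact disjoint_filter_filter (disjoint_filter_filter_not (𝓐.erase A') (𝓐.erase A') _)
        by_cases he : e ∈ A'
        · rw [if_pos he, if_pos he, sum_insert h3, h2, filter_union, sum_union hIO]
        · rw [if_neg he, if_neg he, zero_add, h2, filter_union, sum_union hIO]
      by_cases he : e ∈ A'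
      · have hOempty : O.filter (fun A => e ∈ A) = ∅ := by
          rw [filter_eq_empty_iff]
          intro A hA hc
          exact (disjoint_left.mp (hOdisj A hA)) hc he
        have hIval : ∀ A ∈ I.filter (fun A => e ∈ A),
            (if A = A' then ⌊t + lam A'⌋ - ⌊t⌋ else if A ⊆ A' then lamI A else lamO A) =
              lamI A := by
          intro A hA
          have hAI : A ∈ I := mem_of_mem_filter A hA
          have h1 : A ≠ A' := ne_of_mem_erase (by rw [hIdef] at hAI; exact mem_of_mem_filter A hAI)
          have h2 : A ⊆ A' := by rw [hIdef, mem_filter] at hAI; exact hAI.2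
          rw [if_neg h1, if_pos h2]
        rw [hsplit ℤ _ _, hsplit ℝ _ _, hOempty, sum_empty, sum_empty, add_zero, add_zero,
          if_pos he, if_pos he, if_pos rfl, sum_congr rfl hIval, hlamI e]
        have : t + (lam A' + ∑ A ∈ I.filter (fun A => e ∈ A), lam A)
            = t + lam A' + ∑ A ∈ I.filter (fun A => e ∈ A), lam A := by ring
        rw [this]
        omega
      · have hIempty : I.filter (fun A => e ∈ A) = ∅ := by
          rw [filter_eq_empty_iff]
          intro A hA hc
          have hAI : A ∈ I := hA
          rw [hIdef, mem_filter] at hAI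
          exact he (hAI.2 hc)
        have hOval : ∀ A ∈ O.filter (fun A => e ∈ A),
            (if A = A' then ⌊t + lam A'⌋ - ⌊t⌋ else if A ⊆ A' then lamI A else lamO A) =
              lamO A := by
          intro A hA
          have hAO : A ∈ O := mem_of_mem_filter A hA
          have h1 : A ≠ A' := ne_of_mem_erase (by rw [hOdef] at hAO; exact mem_of_mem_filter A hAO)
          have h2 : ¬ A ⊆ A' := by rw [hOdef, mem_filter] at hAO; exact hAO.2
          rw [if_neg h1, if_neg h2]
        rw [hsplit ℤ _ _, hsplit ℝ _ _]
        simp only [hIempty, sum_empty, if_neg he, zero_add]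
        rw [sum_congr rfl hOval, hlamO e]

lemma chain_zero_of_lattice
    (𝒢 : Finset (Finset E))
    (hU : ∀ G ∈ 𝒢, ∀ H ∈ 𝒢, G ∪ H ∈ 𝒢) (hI : ∀ G ∈ 𝒢, ∀ H ∈ 𝒢, G ∩ H ∈ 𝒢)
    (𝓒 : Finset (Finset E)) (h𝓒 : 𝓒 ⊆ 𝒢)
    (hchain : ∀ A ∈ 𝓒, ∀ B ∈ 𝓒, A ⊆ B ∨ B ⊆ A)
    (hmax : ∀ G ∈ 𝒢, (∀ C ∈ 𝓒, C ⊆ G ∨ G ⊆ C) → G ∈ 𝓒)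
    (d : E → ℝ) (hd : ∀ C ∈ 𝓒, ∑ e ∈ C, d e = 0) :
    ∀ G ∈ 𝒢, ∑ e ∈ G, d e = 0 := by
  suffices key : ∀ k : ℕ, ∀ G ∈ 𝒢, (Finset.univ \ G).card ≤ k → ∑ e ∈ G, d e = 0 by
    exact fun G hG => key (Finset.univ \ G).card G hG le_rfl
  intro k
  induction k using Nat.strong_induction_on with
  | _ k ihk =>
    intro G hG hcard
    by_cases hGC : G ∈ 𝓒
    · exact hd G hGC
    have hex : ∃ C ∈ 𝓒, ¬ C ⊆ G := by
      by_contra h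
      push_neg at h
      exact hGC (hmax G hG (fun C hC => Or.inl (h C hC)))
    have hne : (𝓒.filter (fun C => ¬ C ⊆ G)).Nonempty := by
      obtain ⟨C, hC1, hC2⟩ := hex
      exact ⟨C, mem_filter.mpr ⟨hC1, hC2⟩⟩
    obtain ⟨C', hC'mem, hC'min⟩ : ∃ i ∈ 𝓒.filter (fun C => ¬ C ⊆ G),
        ∀ x ∈ 𝓒.filter (fun C => ¬ C ⊆ G), ¬ x < i := by
      obtain ⟨i, hi⟩ := (𝓒.filter (fun C => ¬ C ⊆ G)).exists_minimal hne
      exact ⟨i, hi.1, fun x hx hlt => lt_irrefl x (lt_of_lt_of_le hlt (hi.2 hx hlt.le))⟩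
    have hC'𝓒 : C' ∈ 𝓒 := (mem_filter.mp hC'mem).1
    have hC'nsub : ¬ C' ⊆ G := (mem_filter.mp hC'mem).2
    have hcomp : ∀ C ∈ 𝓒, C ⊆ G ∩ C' ∨ G ∩ C' ⊆ C := by
      intro C hC
      by_cases hCG : C ⊆ G
      · rcases hchain C hC C' hC'𝓒 with h1 | h1
        · exact Or.inl (subset_inter hCG h1)
        · exact absurd (h1.trans hCG) hC'nsub
      · rcases hchain C hC C' hC'𝓒 with h1 | h1
        · by_cases heq : C = C'
          · exact Or.inr (heq ▸ inter_subset_right)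
          · exact absurd (lt_of_le_of_ne h1 heq)
              (hC'min C (mem_filter.mpr ⟨hC, hCG⟩))
        · exact Or.inr (inter_subset_right.trans h1)
    have hGC'mem : G ∩ C' ∈ 𝒢 := hI G hG C' (h𝓒 hC'𝓒)
    have hinter𝓒 : G ∩ C' ∈ 𝓒 := hmax _ hGC'mem hcomp
    have hGU : G ∪ C' ∈ 𝒢 := hU G hG C' (h𝓒 hC'𝓒)
    have hssub : G ⊂ G ∪ C' := by
      refine ⟨subset_union_left, fun hc => ?_⟩
      exact hC'nsub (subset_union_right.trans hc)
    have hlt : (Finset.univ \ (G ∪ C')).card < (Finset.univ \ G).card := by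
      have h1 : (Finset.univ \ G).card = Fintype.card E - G.card := by
        rw [card_sdiff_of_subset (subset_univ _), card_univ]
      have h2 : (Finset.univ \ (G ∪ C')).card = Fintype.card E - (G ∪ C').card := by
        rw [card_sdiff_of_subset (subset_univ _), card_univ]
      have h3 : G.card < (G ∪ C').card := card_lt_card hssub
      have h4 : (G ∪ C').card ≤ Fintype.card E := by
        rw [← card_univ]; exact card_le_card (subset_univ _)
      omega
    have hrec : ∑ e ∈ G ∪ C', d e = 0 :=
      ihk (Finset.univ \ (G ∪ C')).card (lt_of_lt_of_le hlt hcard) (G ∪ C') hGU le_rfl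
    have hsum : ∑ e ∈ G ∪ C', d e + ∑ e ∈ G ∩ C', d e = ∑ e ∈ G, d e + ∑ e ∈ C', d e :=
      Finset.sum_union_inter
    have h5 := hd C' hC'𝓒
    have h6 := hd _ hinter𝓒
    linarith

end Aux

/-- **Integrality of the intersection of laminar constraints with a matroid polytope.**
Let `𝓛` be a laminar family on a finite ground set `E`, and let `r` be the rank function
of a matroid on `E` (normalized, monotone, submodular). Then the polytope `P` consisting of
nonnegative `x` with integer upper bounds `b₁` on sets of `𝓛₁ ⊆ 𝓛`, integer lower bounds
`b₂` on sets of `𝓛₂ ⊆ 𝓛`, and `x(S) ≤ r(S)` for all `S ⊆ E`, is either empty or has all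
its extreme points integral. -/
theorem laminar_matroid_polytope_integral
    (E : Type) [Fintype E] [DecidableEq E]
    (𝓛 : Set (Finset E))
    (hlaminar : ∀ A ∈ 𝓛, ∀ B ∈ 𝓛, A ⊆ B ∨ B ⊆ A ∨ Disjoint A B)
    (r : Finset E → ℕ)
    (hr_card : ∀ S, r S ≤ S.card)
    (hr_mono : ∀ S T : Finset E, S ⊆ T → r S ≤ r T)
    (hr_submod : ∀ S T : Finset E, r (S ∪ T) + r (S ∩ T) ≤ r S + r T)
    (𝓛₁ 𝓛₂ : Set (Finset E)) (h𝓛₁ : 𝓛₁ ⊆ 𝓛) (h𝓛₂ : 𝓛₂ ⊆ 𝓛)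
    (b₁ b₂ : Finset E → ℤ)
    (P : Set (E → ℝ))
    (hP : P = {x | (∀ e, 0 ≤ x e) ∧
        (∀ L ∈ 𝓛₁, ∑ e ∈ L, x e ≤ (b₁ L : ℝ)) ∧
        (∀ L ∈ 𝓛₂, (b₂ L : ℝ) ≤ ∑ e ∈ L, x e) ∧
        (∀ S : Finset E, ∑ e ∈ S, x e ≤ (r S : ℝ))}) :
    P = ∅ ∨ ∀ x ∈ P.extremePoints ℝ, ∀ e : E, ∃ z : ℤ, x e = (z : ℝ) := by
  classical
  right
  intro x hx e₀
  by_contra he₀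
  obtain ⟨hxP, hxext⟩ := hx
  rw [hP] at hxP
  obtain ⟨hx0, hxb1, hxb2, hxr⟩ := hxP
  have hNE : Nonempty E := ⟨e₀⟩
  set F : Finset E := univ.filter (fun e => ¬ ∃ z : ℤ, x e = (z : ℝ)) with hFdef
  have he₀F : e₀ ∈ F := mem_filter.mpr ⟨mem_univ _, he₀⟩
  have hoffF : ∀ e, e ∉ F → ∃ z : ℤ, x e = (z : ℝ) := by
    intro e he
    by_contra hc
    exact he (mem_filter.mpr ⟨mem_univ _, hc⟩)
  -- tight laminar family
  set 𝓐 : Finset (Finset E) := univ.filter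
    (fun L => (L ∈ 𝓛₁ ∧ ∑ e ∈ L, x e = (b₁ L : ℝ)) ∨ (L ∈ 𝓛₂ ∧ ∑ e ∈ L, x e = (b₂ L : ℝ)))
    with h𝓐def
  have h𝓐lam : ∀ A ∈ 𝓐, ∀ B ∈ 𝓐, A ⊆ B ∨ B ⊆ A ∨ Disjoint A B := by
    intro A hA B hB
    rw [h𝓐def, mem_filter] at hA hB
    have hA' : A ∈ 𝓛 := by rcases hA.2 with h | h; exacts [h𝓛₁ h.1, h𝓛₂ h.1]
    have hB' : B ∈ 𝓛 := by rcases hB.2 with h | h; exacts [h𝓛₁ h.1, h𝓛₂ h.1]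
    exact hlaminar A hA' B hB'
  have h𝓐int : ∀ A ∈ 𝓐, ∃ z : ℤ, ∑ e ∈ A, x e = (z : ℝ) := by
    intro A hA
    rw [h𝓐def, mem_filter] at hA
    rcases hA.2 with h | h
    exacts [⟨b₁ A, h.2⟩, ⟨b₂ A, h.2⟩]
  -- tight matroid sets
  set 𝒯 : Finset (Finset E) := univ.filter (fun S => ∑ e ∈ S, x e = (r S : ℝ)) with h𝒯def
  have h𝒯mem : ∀ S, S ∈ 𝒯 ↔ ∑ e ∈ S, x e = (r S : ℝ) := by
    intro S
    rw [h𝒯def, mem_filter]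
    simp
  have h𝒯lattice : ∀ S ∈ 𝒯, ∀ T ∈ 𝒯, S ∪ T ∈ 𝒯 ∧ S ∩ T ∈ 𝒯 := by
    intro S hS T hT
    rw [h𝒯mem] at hS hT
    have h1 := hxr (S ∪ T)
    have h2 := hxr (S ∩ T)
    have h3 : ((r (S ∪ T) : ℝ) + (r (S ∩ T) : ℝ)) ≤ (r S : ℝ) + (r T : ℝ) := by
      exact_mod_cast hr_submod S T
    have h4 : ∑ e ∈ S ∪ T, x e + ∑ e ∈ S ∩ T, x e = ∑ e ∈ S, x e + ∑ e ∈ T, x e :=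
      Finset.sum_union_inter
    rw [h𝒯mem, h𝒯mem]
    constructor <;> linarith
  set 𝒢 : Finset (Finset E) := 𝒯.image (· ∩ F) with h𝒢def
  have h𝒢U : ∀ G ∈ 𝒢, ∀ H ∈ 𝒢, G ∪ H ∈ 𝒢 := by
    intro G hG H hH
    rw [h𝒢def, mem_image] at hG hH ⊢
    obtain ⟨S, hS, rfl⟩ := hG
    obtain ⟨T, hT, rfl⟩ := hH
    refine ⟨S ∪ T, (h𝒯lattice S hS T hT).1, ?_⟩
    ext a
    simp only [mem_inter, mem_union]
    tauto
  have h𝒢I : ∀ G ∈ 𝒢, ∀ H ∈ 𝒢, G ∩ H ∈ 𝒢 := by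
    intro G hG H hH
    rw [h𝒢def, mem_image] at hG hH ⊢
    obtain ⟨S, hS, rfl⟩ := hG
    obtain ⟨T, hT, rfl⟩ := hH
    refine ⟨S ∩ T, (h𝒯lattice S hS T hT).2, ?_⟩
    ext a
    simp only [mem_inter]
    tauto
  have h𝒢int : ∀ G ∈ 𝒢, ∃ z : ℤ, ∑ e ∈ G, x e = (z : ℝ) := by
    intro G hG
    rw [h𝒢def, mem_image] at hG
    obtain ⟨S, hS, rfl⟩ := hG
    rw [h𝒯mem] at hS
    obtain ⟨z, hz⟩ := sum_int_of_forall_int x (S \ F) (fun e he => hoffF e (mem_sdiff.mp he).2)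
    refine ⟨r S - z, ?_⟩
    have h5 := Finset.sum_inter_add_sum_sdiff S F x
    push_cast
    linarith
  -- maximal chain in 𝒢
  obtain ⟨𝓒, h𝓒mem, h𝓒max'⟩ : ∃ i ∈ 𝒢.powerset.filter
      (fun c : Finset (Finset E) => ∀ A ∈ c, ∀ B ∈ c, A ⊆ B ∨ B ⊆ A),
      ∀ x ∈ 𝒢.powerset.filter (fun c : Finset (Finset E) => ∀ A ∈ c, ∀ B ∈ c, A ⊆ B ∨ B ⊆ A),
        ¬ i < x := by
    obtain ⟨i, hi⟩ := (𝒢.powerset.filter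
      (fun c => ∀ A ∈ c, ∀ B ∈ c, A ⊆ B ∨ B ⊆ A)).exists_maximal ⟨∅, by simp⟩
    exact ⟨i, hi.1, fun x hx hlt => lt_irrefl i (lt_of_lt_of_le hlt (hi.2 hx hlt.le))⟩
  rw [mem_filter, mem_powerset] at h𝓒mem
  obtain ⟨h𝓒sub, h𝓒chain⟩ := h𝓒mem
  have h𝓒max : ∀ G ∈ 𝒢, (∀ C ∈ 𝓒, C ⊆ G ∨ G ⊆ C) → G ∈ 𝓒 := by
    intro G hG hcompat
    by_contra hGn
    refine h𝓒max' (insert G 𝓒) (mem_filter.mpr ⟨mem_powerset.mpr (insert_subset hG h𝓒sub), ?_⟩)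
      (ssubset_insert hGn)
    intro A hA B hB
    rcases mem_insert.mp hA with rfl | hA'
    · rcases mem_insert.mp hB with rfl | hB'
      · exact Or.inl subset_rfl
      · exact (hcompat B hB').symm
    · rcases mem_insert.mp hB with rfl | hB'
      · exact hcompat A hA'
      · exact h𝓒chain A hA' B hB'
  have h𝓒int : ∀ C ∈ 𝓒, ∃ z : ℤ, ∑ e ∈ C, x e = (z : ℝ) := fun C hC => h𝒢int C (h𝓒sub hC)
  have h𝓒lam : ∀ A ∈ 𝓒, ∀ B ∈ 𝓒, A ⊆ B ∨ B ⊆ A ∨ Disjoint A B :=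
    fun A hA B hB => (h𝓒chain A hA B hB).imp id Or.inl
  have h𝓒subF : ∀ C ∈ 𝓒, C ⊆ F := by
    intro C hC
    have h1 := h𝓒sub hC
    rw [h𝒢def, mem_image] at h1
    obtain ⟨S, _, rfl⟩ := h1
    exact inter_subset_right
  -- the spanning vectors
  set v : (Finset E ⊕ (Finset E ⊕ E)) → (E → ℝ) := Sum.elim
      (fun A => fun e => if A ∈ 𝓐 ∧ e ∈ A ∩ F then (1:ℝ) else 0)
      (Sum.elim
        (fun C => fun e => if C ∈ 𝓒 ∧ e ∈ C then (1:ℝ) else 0)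
        (fun f => fun e => if f ∉ F ∧ f = e then (1:ℝ) else 0))
    with hvdef
  by_cases hspan : Submodule.span ℝ (Set.range v) = ⊤
  · -- span case: x e₀ is an integer, contradiction
    have h1 : (fun e => if e = e₀ then (1:ℝ) else 0) ∈ Submodule.span ℝ (Set.range v) := by
      rw [hspan]; exact Submodule.mem_top
    obtain ⟨c, hc⟩ := (Submodule.mem_span_range_iff_exists_fun ℝ).mp h1
    set lamA : Finset E → ℝ := fun A => c (Sum.inl A) with hlamAdef
    set lamC : Finset E → ℝ := fun C => c (Sum.inr (Sum.inl C)) with hlamCdef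
    have hcoord : ∀ e ∈ F,
        (∑ A ∈ 𝓐.filter (fun A => e ∈ A), lamA A)
          + (∑ C ∈ 𝓒.filter (fun C => e ∈ C), lamC C)
          = (if e = e₀ then (1:ℝ) else 0) := by
      intro e heF
      have h3 := congrFun hc e
      rw [Finset.sum_apply] at h3
      simp only [Pi.smul_apply, smul_eq_mul] at h3
      rw [Fintype.sum_sum_type, Fintype.sum_sum_type] at h3
      have hS1 : ∑ A : Finset E, c (Sum.inl A) * v (Sum.inl A) e
          = ∑ A ∈ 𝓐.filter (fun A => e ∈ A), lamA A := by
        have : ∀ A : Finset E, c (Sum.inl A) * v (Sum.inl A) e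
            = if A ∈ 𝓐.filter (fun A => e ∈ A) then lamA A else 0 := by
          intro A
          simp only [hvdef, Sum.elim_inl]
          rw [mul_ite, mul_one, mul_zero]
          congr 1
          simp only [mem_filter, mem_inter, eq_iff_iff]
          constructor
          · rintro ⟨h5, h6, _⟩; exact ⟨h5, h6⟩
          · rintro ⟨h5, h6⟩; exact ⟨h5, h6, heF⟩
        rw [Finset.sum_congr rfl (fun A _ => this A), Finset.sum_ite_mem, univ_inter]
      have hS2 : ∑ C : Finset E, c (Sum.inr (Sum.inl C)) * v (Sum.inr (Sum.inl C)) e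
          = ∑ C ∈ 𝓒.filter (fun C => e ∈ C), lamC C := by
        have : ∀ C : Finset E, c (Sum.inr (Sum.inl C)) * v (Sum.inr (Sum.inl C)) e
            = if C ∈ 𝓒.filter (fun C => e ∈ C) then lamC C else 0 := by
          intro C
          simp only [hvdef, Sum.elim_inr, Sum.elim_inl]
          rw [mul_ite, mul_one, mul_zero]
          congr 1
          simp only [mem_filter, eq_iff_iff]
        rw [Finset.sum_congr rfl (fun C _ => this C), Finset.sum_ite_mem, univ_inter]
      have hS3 : ∑ f : E, c (Sum.inr (Sum.inr f)) * v (Sum.inr (Sum.inr f)) e = 0 := by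
        refine Finset.sum_eq_zero fun f _ => ?_
        simp only [hvdef, Sum.elim_inr]
        rw [mul_ite, mul_one, mul_zero, if_neg]
        rintro ⟨hf, rfl⟩
        exact hf heF
      rw [hS1, hS2, hS3, add_zero] at h3
      exact h3
    obtain ⟨lamA', hlamA'⟩ := laminar_floor_coeffs 𝓐.card 𝓐 le_rfl h𝓐lam lamA 0
    obtain ⟨lamC'', hlamC''⟩ := laminar_floor_coeffs 𝓒.card 𝓒 le_rfl h𝓒lam (fun C => - lamC C) 0
    have hkey : ∀ e ∈ F,
        ((∑ A ∈ 𝓐.filter (fun A => e ∈ A), lamA' A)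
          - ∑ C ∈ 𝓒.filter (fun C => e ∈ C), lamC'' C)
          = (if e = e₀ then (1:ℤ) else 0) := by
      intro e heF
      have h2 := hcoord e heF
      have hA := hlamA' e
      have hC := hlamC'' e
      rw [Int.floor_zero, sub_zero, zero_add] at hA hC
      rw [Finset.sum_neg_distrib] at hC
      set m : ℤ := if e = e₀ then (1:ℤ) else 0 with hmdef
      have hm : ((m : ℤ) : ℝ) = (if e = e₀ then (1:ℝ) else 0) := by
        rw [hmdef]; split <;> simp
      have hb : -(∑ C ∈ 𝓒.filter (fun C => e ∈ C), lamC C)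
          = (∑ A ∈ 𝓐.filter (fun A => e ∈ A), lamA A) - (m : ℝ) := by
        rw [hm]; linarith
      rw [hb, Int.floor_sub_intCast] at hC
      rw [hA, hC]
      omega
    -- integrality of set sums restricted to F
    have h𝓐z : ∀ A ∈ 𝓐, ∃ z : ℤ, ∑ e ∈ F.filter (fun e => e ∈ A), x e = (z : ℝ) := by
      intro A hA
      obtain ⟨zA, hzA⟩ := h𝓐int A hA
      obtain ⟨w, hw⟩ := sum_int_of_forall_int x (A \ F) (fun e he => hoffF e (mem_sdiff.mp he).2)
      refine ⟨zA - w, ?_⟩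
      have h5 := Finset.sum_inter_add_sum_sdiff A F x
      have h6 : F.filter (fun e => e ∈ A) = A ∩ F := by
        rw [filter_mem_eq_inter, inter_comm]
      rw [h6]
      push_cast
      linarith
    have h𝓒z : ∀ C ∈ 𝓒, ∃ z : ℤ, ∑ e ∈ F.filter (fun e => e ∈ C), x e = (z : ℝ) := by
      intro C hC
      obtain ⟨z, hz⟩ := h𝓒int C hC
      refine ⟨z, ?_⟩
      have h6 : F.filter (fun e => e ∈ C) = C := by
        rw [filter_mem_eq_inter, inter_comm]
        exact inter_eq_left.mpr (h𝓒subF C hC)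
      rw [h6]
      exact hz
    -- swap summation
    have hswap : ∀ (𝓑 : Finset (Finset E)) (w : Finset E → ℤ),
        ∑ e ∈ F, x e * (∑ B ∈ 𝓑.filter (fun B => e ∈ B), (w B : ℝ))
          = ∑ B ∈ 𝓑, (w B : ℝ) * (∑ e ∈ F.filter (fun e => e ∈ B), x e) := by
      intro 𝓑 w
      calc ∑ e ∈ F, x e * ∑ B ∈ 𝓑.filter (fun B => e ∈ B), (w B : ℝ)
          = ∑ e ∈ F, ∑ B ∈ 𝓑.filter (fun B => e ∈ B), x e * (w B : ℝ) := by
            refine Finset.sum_congr rfl fun e _ => ?_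
            rw [Finset.mul_sum]
        _ = ∑ e ∈ F, ∑ B ∈ 𝓑, if e ∈ B then x e * (w B : ℝ) else 0 :=
            Finset.sum_congr rfl fun e _ => Finset.sum_filter _ _
        _ = ∑ B ∈ 𝓑, ∑ e ∈ F, if e ∈ B then x e * (w B : ℝ) else 0 := Finset.sum_comm
        _ = ∑ B ∈ 𝓑, ∑ e ∈ F.filter (fun e => e ∈ B), x e * (w B : ℝ) :=
            Finset.sum_congr rfl fun B _ => (Finset.sum_filter _ _).symm
        _ = ∑ B ∈ 𝓑, (w B : ℝ) * ∑ e ∈ F.filter (fun e => e ∈ B), x e := by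
            refine Finset.sum_congr rfl fun B _ => ?_
            rw [Finset.mul_sum]
            refine Finset.sum_congr rfl fun e _ => ?_
            ring
    -- final computation
    have hxe₀ : x e₀ = ∑ e ∈ F, x e * (((if e = e₀ then (1:ℤ) else 0) : ℤ) : ℝ) := by
      have h7 : ∀ e ∈ F, x e * (((if e = e₀ then (1:ℤ) else 0) : ℤ) : ℝ)
          = if e = e₀ then x e else 0 := by
        intro e _
        split <;> simp
      rw [Finset.sum_congr rfl h7, Finset.sum_ite_eq' F e₀ x, if_pos he₀F]
    have hstep : ∑ e ∈ F, x e * (((if e = e₀ then (1:ℤ) else 0) : ℤ) : ℝ)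
        = ∑ e ∈ F, x e * (((∑ A ∈ 𝓐.filter (fun A => e ∈ A), lamA' A) : ℝ)
            - ((∑ C ∈ 𝓒.filter (fun C => e ∈ C), lamC'' C) : ℝ)) := by
      refine Finset.sum_congr rfl fun e he => ?_
      congr 1
      rw [← hkey e he]
      push_cast
      ring
    have hsplit2 : ∑ e ∈ F, x e * (((∑ A ∈ 𝓐.filter (fun A => e ∈ A), lamA' A) : ℝ)
            - ((∑ C ∈ 𝓒.filter (fun C => e ∈ C), lamC'' C) : ℝ))
        = (∑ A ∈ 𝓐, (lamA' A : ℝ) * (∑ e ∈ F.filter (fun e => e ∈ A), x e))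
          - (∑ C ∈ 𝓒, (lamC'' C : ℝ) * (∑ e ∈ F.filter (fun e => e ∈ C), x e)) := by
      rw [← hswap 𝓐 lamA', ← hswap 𝓒 lamC'', ← Finset.sum_sub_distrib]
      refine Finset.sum_congr rfl fun e _ => ?_
      push_cast
      ring
    set zA : Finset E → ℤ := fun A => if hA : A ∈ 𝓐 then (h𝓐z A hA).choose else 0 with hzAdef
    set zC : Finset E → ℤ := fun C => if hC : C ∈ 𝓒 then (h𝓒z C hC).choose else 0 with hzCdef
    have hzAspec : ∀ A ∈ 𝓐, ∑ e ∈ F.filter (fun e => e ∈ A), x e = ((zA A : ℤ) : ℝ) := by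
      intro A hA
      rw [hzAdef]
      simp only [dif_pos hA]
      exact (h𝓐z A hA).choose_spec
    have hzCspec : ∀ C ∈ 𝓒, ∑ e ∈ F.filter (fun e => e ∈ C), x e = ((zC C : ℤ) : ℝ) := by
      intro C hC
      rw [hzCdef]
      simp only [dif_pos hC]
      exact (h𝓒z C hC).choose_spec
    have hA' : ∑ A ∈ 𝓐, (lamA' A : ℝ) * (∑ e ∈ F.filter (fun e => e ∈ A), x e)
        = ∑ A ∈ 𝓐, (lamA' A : ℝ) * ((zA A : ℤ) : ℝ) :=
      Finset.sum_congr rfl fun A hA => by rw [hzAspec A hA]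
    have hC' : ∑ C ∈ 𝓒, (lamC'' C : ℝ) * (∑ e ∈ F.filter (fun e => e ∈ C), x e)
        = ∑ C ∈ 𝓒, (lamC'' C : ℝ) * ((zC C : ℤ) : ℝ) :=
      Finset.sum_congr rfl fun C hC => by rw [hzCspec C hC]
    refine he₀ ⟨(∑ A ∈ 𝓐, lamA' A * zA A) - ∑ C ∈ 𝓒, lamC'' C * zC C, ?_⟩
    rw [hxe₀, hstep, hsplit2, hA', hC']
    push_cast
    ring
  · -- perturbation case
    have hlt : ∃ w : E → ℝ, w ∉ Submodule.span ℝ (Set.range v) := by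
      by_contra h
      push_neg at h
      exact hspan (Submodule.eq_top_iff'.mpr h)
    obtain ⟨w, hw⟩ := hlt
    obtain ⟨f, hfw, hfmap⟩ := Submodule.exists_dual_map_eq_bot_of_notMem hw inferInstance
    have hf0 : ∀ u ∈ Submodule.span ℝ (Set.range v), f u = 0 := by
      intro u hu
      have h1 : f u ∈ (Submodule.span ℝ (Set.range v)).map f := Submodule.mem_map_of_mem hu
      rw [hfmap] at h1
      exact (Submodule.mem_bot ℝ).mp h1
    set d : E → ℝ := fun e => f (fun j => if e = j then (1:ℝ) else 0) with hddef
    have hfrep : ∀ u : E → ℝ, f u = ∑ e, u e * d e := by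
      intro u
      conv_lhs => rw [pi_eq_sum_univ u]
      rw [map_sum]
      refine Finset.sum_congr rfl fun e _ => ?_
      rw [map_smul, smul_eq_mul]
    have hdind : ∀ S : Finset E, f (fun e => if e ∈ S then (1:ℝ) else 0) = ∑ e ∈ S, d e := by
      intro S
      rw [hfrep]
      simp only [ite_mul, one_mul, zero_mul]
      rw [Finset.sum_ite_mem, univ_inter]
    have hvmem : ∀ i, f (v i) = 0 := fun i => hf0 _ (Submodule.subset_span (Set.mem_range_self i))
    have hA0 : ∀ A ∈ 𝓐, ∑ e ∈ A ∩ F, d e = 0 := by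
      intro A hA
      have h1 := hvmem (Sum.inl A)
      have hveq : v (Sum.inl A) = (fun e => if e ∈ A ∩ F then (1:ℝ) else 0) := by
        funext e
        simp only [hvdef, Sum.elim_inl]
        by_cases he : e ∈ A ∩ F
        · rw [if_pos ⟨hA, he⟩, if_pos he]
        · rw [if_neg (fun hc => he hc.2), if_neg he]
      rw [hveq, hdind] at h1
      exact h1
    have hC0 : ∀ C ∈ 𝓒, ∑ e ∈ C, d e = 0 := by
      intro C hC
      have h1 := hvmem (Sum.inr (Sum.inl C))
      have hveq : v (Sum.inr (Sum.inl C)) = (fun e => if e ∈ C then (1:ℝ) else 0) := by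
        funext e
        simp only [hvdef, Sum.elim_inr, Sum.elim_inl]
        by_cases he : e ∈ C
        · rw [if_pos ⟨hC, he⟩, if_pos he]
        · rw [if_neg (fun hc => he hc.2), if_neg he]
      rw [hveq, hdind] at h1
      exact h1
    have hF0 : ∀ e, e ∉ F → d e = 0 := by
      intro e he
      have h1 := hvmem (Sum.inr (Sum.inr e))
      have hveq : v (Sum.inr (Sum.inr e)) = (fun j => if e = j then (1:ℝ) else 0) := by
        funext j
        simp only [hvdef, Sum.elim_inr]
        by_cases hj : e = j
        · rw [if_pos ⟨he, hj⟩, if_pos hj]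
        · rw [if_neg (fun hc => hj hc.2), if_neg hj]
      rw [hveq] at h1
      rw [hddef]
      exact h1
    have hdne : d ≠ 0 := by
      intro hd0
      apply hfw
      rw [hfrep w]
      refine Finset.sum_eq_zero fun e _ => ?_
      rw [hd0]
      simp
    have hT0 : ∀ S : Finset E, ∑ e ∈ S, x e = (r S : ℝ) → ∑ e ∈ S, d e = 0 := by
      intro S hS
      have h1 : S ∩ F ∈ 𝒢 := by
        rw [h𝒢def, mem_image]
        exact ⟨S, by rw [h𝒯mem]; exact hS, rfl⟩
      have h2 : ∑ e ∈ S ∩ F, d e = 0 :=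
        chain_zero_of_lattice 𝒢 h𝒢U h𝒢I 𝓒 h𝓒sub h𝓒chain h𝓒max d hC0 _ h1
      have h3 : ∑ e ∈ S \ F, d e = 0 :=
        Finset.sum_eq_zero (fun e he => hF0 e (mem_sdiff.mp he).2)
      have h4 := Finset.sum_inter_add_sum_sdiff S F d
      linarith
    have hL1 : ∀ L ∈ 𝓛₁, ∑ e ∈ L, x e = (b₁ L : ℝ) → ∑ e ∈ L, d e = 0 := by
      intro L hL ht
      have h1 : L ∈ 𝓐 := by
        rw [h𝓐def, mem_filter]
        exact ⟨mem_univ _, Or.inl ⟨hL, ht⟩⟩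
      have h2 := hA0 L h1
      have h3 : ∑ e ∈ L \ F, d e = 0 :=
        Finset.sum_eq_zero (fun e he => hF0 e (mem_sdiff.mp he).2)
      have h4 := Finset.sum_inter_add_sum_sdiff L F d
      linarith
    have hL2 : ∀ L ∈ 𝓛₂, ∑ e ∈ L, x e = (b₂ L : ℝ) → ∑ e ∈ L, d e = 0 := by
      intro L hL ht
      have h1 : L ∈ 𝓐 := by
        rw [h𝓐def, mem_filter]
        exact ⟨mem_univ _, Or.inr ⟨hL, ht⟩⟩
      have h2 := hA0 L h1
      have h3 : ∑ e ∈ L \ F, d e = 0 :=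
        Finset.sum_eq_zero (fun e he => hF0 e (mem_sdiff.mp he).2)
      have h4 := Finset.sum_inter_add_sum_sdiff L F d
      linarith
    have hx00 : ∀ e, x e = 0 → d e = 0 := by
      intro e hxe
      refine hF0 e fun hc => ?_
      rw [hFdef, mem_filter] at hc
      exact hc.2 ⟨0, by rw [hxe]; norm_num⟩
    -- choose epsilon
    set g₁ : E → ℝ := fun e => if x e = 0 then 1 else x e / (|d e| + 1) with hg₁
    set g₂ : Finset E → ℝ := fun S => if ∑ e ∈ S, x e = (r S : ℝ) then 1
      else ((r S : ℝ) - ∑ e ∈ S, x e) / (|∑ e ∈ S, d e| + 1) with hg₂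
    set g₃ : Finset E → ℝ := fun L => if L ∈ 𝓛₁ ∧ ¬ (∑ e ∈ L, x e = (b₁ L : ℝ))
      then ((b₁ L : ℝ) - ∑ e ∈ L, x e) / (|∑ e ∈ L, d e| + 1) else 1 with hg₃
    set g₄ : Finset E → ℝ := fun L => if L ∈ 𝓛₂ ∧ ¬ (∑ e ∈ L, x e = (b₂ L : ℝ))
      then (∑ e ∈ L, x e - (b₂ L : ℝ)) / (|∑ e ∈ L, d e| + 1) else 1 with hg₄
    set ε : ℝ := min ((univ : Finset E).inf' univ_nonempty g₁)
      (min ((univ : Finset (Finset E)).inf' univ_nonempty g₂)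
        (min ((univ : Finset (Finset E)).inf' univ_nonempty g₃)
          ((univ : Finset (Finset E)).inf' univ_nonempty g₄))) with hεdef
    have hεpos : 0 < ε := by
      refine lt_min ?_ (lt_min ?_ (lt_min ?_ ?_)) <;> rw [Finset.lt_inf'_iff]
      · intro e _
        rw [hg₁]
        dsimp only
        split
        · norm_num
        · have h1 : 0 < x e := lt_of_le_of_ne (hx0 e) (Ne.symm (by assumption))
          positivity
      · intro S _
        rw [hg₂]
        dsimp only
        split
        · norm_num
        · have h1 : ∑ e ∈ S, x e < (r S : ℝ) := lt_of_le_of_ne (hxr S) (by assumption)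
          have h2 : 0 < (r S : ℝ) - ∑ e ∈ S, x e := by linarith
          positivity
      · intro L _
        rw [hg₃]
        dsimp only
        split
        · rename_i hcond
          have h1 : ∑ e ∈ L, x e < (b₁ L : ℝ) := lt_of_le_of_ne (hxb1 L hcond.1) hcond.2
          have h2 : 0 < (b₁ L : ℝ) - ∑ e ∈ L, x e := by linarith
          positivity
        · norm_num
      · intro L _
        rw [hg₄]
        dsimp only
        split
        · rename_i hcond
          have h1 : (b₂ L : ℝ) < ∑ e ∈ L, x e :=
            lt_of_le_of_ne (hxb2 L hcond.1) (fun hc => hcond.2 hc.symm)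
          have h2 : 0 < ∑ e ∈ L, x e - (b₂ L : ℝ) := by linarith
          positivity
        · norm_num
    have hε₁ : ∀ e : E, ε ≤ g₁ e := fun e =>
      le_trans (min_le_left _ _) (Finset.inf'_le _ (mem_univ e))
    have hε₂ : ∀ S : Finset E, ε ≤ g₂ S := fun S =>
      le_trans (min_le_right _ _) (le_trans (min_le_left _ _) (Finset.inf'_le _ (mem_univ S)))
    have hε₃ : ∀ L : Finset E, ε ≤ g₃ L := fun L =>
      le_trans (min_le_right _ _) (le_trans (min_le_right _ _)
        (le_trans (min_le_left _ _) (Finset.inf'_le _ (mem_univ L))))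
    have hε₄ : ∀ L : Finset E, ε ≤ g₄ L := fun L =>
      le_trans (min_le_right _ _) (le_trans (min_le_right _ _)
        (le_trans (min_le_right _ _) (Finset.inf'_le _ (mem_univ L))))
    have hmem : ∀ η : ℝ, |η| ≤ ε → (fun e => x e + η * d e) ∈ P := by
      intro η hη
      rw [hP]
      refine ⟨?_, ?_, ?_, ?_⟩
      · intro e
        dsimp only
        by_cases hxe : x e = 0
        · rw [hxe, hx00 e hxe]
          norm_num
        · have h1 : |η| ≤ g₁ e := le_trans hη (hε₁ e)
          rw [hg₁] at h1
          dsimp only at h1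
          rw [if_neg hxe] at h1
          have h2 := abs_mul_le_of_le_div (hx0 e) h1
          have h3 := neg_abs_le (η * d e)
          linarith
      · intro L hL
        have hsum : ∑ e ∈ L, (x e + η * d e) = ∑ e ∈ L, x e + η * ∑ e ∈ L, d e := by
          rw [Finset.sum_add_distrib, Finset.mul_sum]
        rw [hsum]
        by_cases ht : ∑ e ∈ L, x e = (b₁ L : ℝ)
        · rw [hL1 L hL ht, mul_zero, add_zero, ht]
        · have h1 : |η| ≤ g₃ L := le_trans hη (hε₃ L)
          rw [hg₃] at h1
          dsimp only at h1
          rw [if_pos ⟨hL, ht⟩] at h1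
          have hslack : 0 ≤ (b₁ L : ℝ) - ∑ e ∈ L, x e := by
            have := hxb1 L hL
            linarith
          have h2 := abs_mul_le_of_le_div hslack h1
          have h3 := le_abs_self (η * ∑ e ∈ L, d e)
          linarith
      · intro L hL
        have hsum : ∑ e ∈ L, (x e + η * d e) = ∑ e ∈ L, x e + η * ∑ e ∈ L, d e := by
          rw [Finset.sum_add_distrib, Finset.mul_sum]
        rw [hsum]
        by_cases ht : ∑ e ∈ L, x e = (b₂ L : ℝ)
        · rw [hL2 L hL ht, mul_zero, add_zero, ht]
        · have h1 : |η| ≤ g₄ L := le_trans hη (hε₄ L)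
          rw [hg₄] at h1
          dsimp only at h1
          rw [if_pos ⟨hL, ht⟩] at h1
          have hslack : 0 ≤ ∑ e ∈ L, x e - (b₂ L : ℝ) := by
            have := hxb2 L hL
            linarith
          have h2 := abs_mul_le_of_le_div hslack h1
          have h3 := neg_abs_le (η * ∑ e ∈ L, d e)
          linarith
      · intro S
        have hsum : ∑ e ∈ S, (x e + η * d e) = ∑ e ∈ S, x e + η * ∑ e ∈ S, d e := by
          rw [Finset.sum_add_distrib, Finset.mul_sum]
        rw [hsum]
        by_cases ht : ∑ e ∈ S, x e = (r S : ℝ)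
        · rw [hT0 S ht, mul_zero, add_zero, ht]
        · have h1 : |η| ≤ g₂ S := le_trans hη (hε₂ S)
          rw [hg₂] at h1
          dsimp only at h1
          rw [if_neg ht] at h1
          have hslack : 0 ≤ (r S : ℝ) - ∑ e ∈ S, x e := by
            have := hxr S
            linarith
          have h2 := abs_mul_le_of_le_div hslack h1
          have h3 := le_abs_self (η * ∑ e ∈ S, d e)
          linarith
    have hp1 : (fun e => x e + ε * d e) ∈ P := hmem ε (le_of_eq (abs_of_pos hεpos))
    have hp2 : (fun e => x e + (-ε) * d e) ∈ P := by
      refine hmem (-ε) ?_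
      rw [abs_neg, abs_of_pos hεpos]
    have hseg : x ∈ openSegment ℝ (fun e => x e + ε * d e) (fun e => x e + (-ε) * d e) := by
      refine ⟨1/2, 1/2, by norm_num, by norm_num, by norm_num, ?_⟩
      funext e
      simp only [Pi.add_apply, Pi.smul_apply, smul_eq_mul]
      ring
    have h1 := hxext hp1 hp2 hseg
    obtain ⟨e, he⟩ := Function.ne_iff.mp hdne
    simp only [Pi.zero_apply] at he
    have h2 : x e + ε * d e = x e := by
      have := congrFun h1 e
      simpa using this
    have h3 : ε * d e = 0 := by linarith
    rcases mul_eq_zero.mp h3 with h | h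
    exacts [absurd h (ne_of_gt hεpos), he h]
end
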